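/- arXiv:1604.00803 — 3 statements merged into one kernel-verified Lean document; each statement's English description precedes it below -/
import Mathlib

section
/- Let a ≥ 2 and let ℓ be the least common multiple of 1, 2, …, a+1. Define E_a(x) = (1 − x)²·(1 − x^a)²·(1 − x^{a+1})·Π_{i=2}^{a−1} (1 − x^i)³ in ℤ[x]. Then E_a divides (1 − x^ℓ)^{3a−1} in ℤ[x], the quotient Q_a(x) = (1 − x^ℓ)^{3a−1}/E_a(x) has degree ℓ(3a−1) − (3/2)(a² + a), and Q_a is a product of cyclotomic polynomials, i.e. there is a finite multiset S of positive integers such that Q_a(x) = Π_{d ∈ S} Φ_d(x), where Φ_d denotes the d-th cyclotomic polynomial. -/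
open Polynomial Finset

private lemma key_factor {ℓ i : ℕ} (hℓ : 0 < ℓ) (hi : 0 < i) (hiℓ : i ∣ ℓ) :
    (1 - X ^ ℓ : ℤ[X]) =
      (1 - X ^ i) * ∏ d ∈ ℓ.divisors \ i.divisors, cyclotomic d ℤ := by
  have hsub : i.divisors ⊆ ℓ.divisors := Nat.divisors_subset_of_dvd hℓ.ne' hiℓ
  have h1 : ∏ d ∈ ℓ.divisors, cyclotomic d ℤ = X ^ ℓ - 1 :=
    prod_cyclotomic_eq_X_pow_sub_one hℓ ℤ
  have h2 : ∏ d ∈ i.divisors, cyclotomic d ℤ = X ^ i - 1 :=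
    prod_cyclotomic_eq_X_pow_sub_one hi ℤ
  have := Finset.prod_sdiff (f := fun d => cyclotomic d ℤ) hsub
  rw [h1, h2] at this
  have : (X ^ i - 1 : ℤ[X]) * ∏ d ∈ ℓ.divisors \ i.divisors, cyclotomic d ℤ
      = X ^ ℓ - 1 := by rw [mul_comm]; exact this
  linear_combination this

/-- `Q_a = (1 − x^ℓ)^{3a−1} / E_a` exists in `ℤ[x]`, has degree `ℓ(3a−1) − (3/2)(a²+a)`,
and is a product of cyclotomic polynomials, where `ℓ = lcm(1, …, a+1)` and
`E_a = (1 − x)²(1 − x^a)²(1 − x^{a+1})·Π_{i=2}^{a−1}(1 − x^i)³`. -/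
theorem Ggen_denominator_quotient_cyclotomic (a : ℕ) (ha : 2 ≤ a)
    (ℓ : ℕ) (hℓ : ℓ = (Finset.Icc 1 (a + 1)).lcm id)
    (E : Polynomial ℤ)
    (hE : E = (1 - Polynomial.X) ^ 2 * (1 - Polynomial.X ^ a) ^ 2 *
      (1 - Polynomial.X ^ (a + 1)) *
      ∏ i ∈ Finset.Icc 2 (a - 1), (1 - Polynomial.X ^ i) ^ 3) :
    ∃ Q : Polynomial ℤ,
      (1 - Polynomial.X ^ ℓ) ^ (3 * a - 1) = E * Q ∧
      Q.natDegree = ℓ * (3 * a - 1) - 3 * (a ^ 2 + a) / 2 ∧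
      ∃ S : Multiset ℕ, (∀ d ∈ S, 0 < d) ∧
        Q = (S.map fun d => Polynomial.cyclotomic d ℤ).prod := by
  have hℓpos : 0 < ℓ := by
    rw [hℓ]
    apply Nat.pos_of_ne_zero
    rw [Ne, Finset.lcm_eq_zero_iff]
    rintro ⟨x, hx, hx0⟩
    simp only [Finset.mem_coe, Finset.mem_Icc] at hx
    simp only [id] at hx0
    omega
  have hdvd : ∀ i ∈ Finset.Icc 1 (a + 1), i ∣ ℓ := by
    intro i hi; rw [hℓ]; exact Finset.dvd_lcm hi
  -- the complementary cyclotomic factors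
  set D : ℕ → Multiset ℕ := fun i => (ℓ.divisors \ i.divisors).val with hD
  set C : ℕ → ℤ[X] := fun i => ∏ d ∈ ℓ.divisors \ i.divisors, cyclotomic d ℤ with hC
  have hCkey : ∀ i, 0 < i → i ≤ a + 1 → (1 - X ^ ℓ : ℤ[X]) = (1 - X ^ i) * C i := by
    intro i h1 h2
    exact key_factor hℓpos h1 (hdvd i (Finset.mem_Icc.mpr ⟨h1, h2⟩))
  have hCmap : ∀ i, ((D i).map fun d => cyclotomic d ℤ).prod = C i := fun i => rfl
  set S : Multiset ℕ :=
    2 • D 1 + (2 • D a + (D (a + 1) + ∑ i ∈ Finset.Icc 2 (a - 1), 3 • D i)) with hS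
  have hnd : ∀ i : ℕ, (1 - X ^ i : ℤ[X]).natDegree = i := by
    intro i
    rw [show (1 - X ^ i : ℤ[X]) = -(X ^ i - Polynomial.C 1) by simp, natDegree_neg,
      natDegree_X_pow_sub_C]
  have hne : ∀ i : ℕ, 0 < i → (1 - X ^ i : ℤ[X]) ≠ 0 := by
    intro i hi
    rw [show (1 - X ^ i : ℤ[X]) = -(X ^ i - Polynomial.C 1) by simp]
    exact neg_ne_zero.mpr (X_pow_sub_C_ne_zero hi 1)
  set f : ℕ → ℤ[X] := fun d => cyclotomic d ℤ with hf
  have hQ : ((S.map f)).prod =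
      C 1 ^ 2 * (C a ^ 2 * (C (a + 1) * ∏ i ∈ Finset.Icc 2 (a - 1), C i ^ 3)) := by
    have hmap : Multiset.map f (∑ i ∈ Finset.Icc 2 (a - 1), 3 • D i)
        = ∑ i ∈ Finset.Icc 2 (a - 1), Multiset.map f (3 • D i) :=
      map_sum (Multiset.mapAddMonoidHom f) _ _
    rw [hS]
    simp only [Multiset.map_add, Multiset.prod_add, Multiset.map_nsmul, Multiset.prod_nsmul,
      hmap, Multiset.prod_sum]
    simp only [hCmap]
  have hfac : E * ((S.map f)).prod = (1 - X ^ ℓ) ^ (3 * a - 1) := by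
    rw [hQ, hE]
    have e1 : (1 - X : ℤ[X]) = 1 - X ^ 1 := by rw [pow_one]
    have k1 := hCkey 1 one_pos (by omega)
    have ka := hCkey a (by omega) (by omega)
    have ka1 := hCkey (a + 1) (by omega) le_rfl
    have hprod : (∏ i ∈ Finset.Icc 2 (a - 1), (1 - X ^ i : ℤ[X]) ^ 3) *
        ∏ i ∈ Finset.Icc 2 (a - 1), C i ^ 3 = (1 - X ^ ℓ) ^ (3 * (a - 2)) := by
      rw [← Finset.prod_mul_distrib]
      have : ∀ i ∈ Finset.Icc 2 (a - 1), (1 - X ^ i : ℤ[X]) ^ 3 * C i ^ 3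
          = (1 - X ^ ℓ) ^ 3 := by
        intro i hi
        rw [Finset.mem_Icc] at hi
        rw [← mul_pow, ← hCkey i (by omega) (by omega)]
      rw [Finset.prod_congr rfl this, Finset.prod_const, Nat.card_Icc,
        show a - 1 + 1 - 2 = a - 2 from by omega, ← pow_mul]
    calc (1 - X) ^ 2 * (1 - X ^ a) ^ 2 * (1 - X ^ (a + 1)) *
          (∏ i ∈ Finset.Icc 2 (a - 1), ((1 : ℤ[X]) - X ^ i) ^ 3) *
          (C 1 ^ 2 * (C a ^ 2 * (C (a + 1) * ∏ i ∈ Finset.Icc 2 (a - 1), C i ^ 3)))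
        = ((1 - X ^ 1) * C 1) ^ 2 * (((1 - X ^ a) * C a) ^ 2 *
            (((1 - X ^ (a + 1)) * C (a + 1)) *
            ((∏ i ∈ Finset.Icc 2 (a - 1), ((1 : ℤ[X]) - X ^ i) ^ 3) *
              ∏ i ∈ Finset.Icc 2 (a - 1), C i ^ 3))) := by
          rw [← e1]; ring
      _ = (1 - X ^ ℓ) ^ 2 * ((1 - X ^ ℓ) ^ 2 * ((1 - X ^ ℓ) *
            (1 - X ^ ℓ) ^ (3 * (a - 2)))) := by rw [← k1, ← ka, ← ka1, hprod]
      _ = (1 - X ^ ℓ) ^ (3 * a - 1) := by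
          rw [← pow_one ((1 : ℤ[X]) - X ^ ℓ)]
          simp only [← pow_add, ← pow_mul]
          congr 1
          omega
  have hQmonic : ((S.map f)).prod.Monic := by
    apply monic_multiset_prod_of_monic
    intro d _
    exact cyclotomic.monic d ℤ
  refine ⟨((S.map f)).prod, hfac.symm, ?_, S, ?_, rfl⟩
  · -- degree computation
    have hEne : E ≠ 0 := by
      rw [hE]
      refine mul_ne_zero (mul_ne_zero (mul_ne_zero ?_ ?_) ?_) ?_
      · exact pow_ne_zero _ (by simpa using hne 1 one_pos)
      · exact pow_ne_zero _ (hne a (by omega))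
      · exact hne (a + 1) (by omega)
      · exact Finset.prod_ne_zero_iff.mpr fun i hi => by
          rw [Finset.mem_Icc] at hi
          exact pow_ne_zero _ (hne i (by omega))
    have hEdeg : E.natDegree = 2 + 2 * a + (a + 1) + 3 * ∑ i ∈ Finset.Icc 2 (a - 1), i := by
      rw [hE, natDegree_mul (by
            refine mul_ne_zero (mul_ne_zero ?_ ?_) ?_
            · exact pow_ne_zero _ (by simpa using hne 1 one_pos)
            · exact pow_ne_zero _ (hne a (by omega))
            · exact hne (a + 1) (by omega))
          (Finset.prod_ne_zero_iff.mpr fun i hi => by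
            rw [Finset.mem_Icc] at hi
            exact pow_ne_zero _ (hne i (by omega))),
        natDegree_mul (mul_ne_zero (pow_ne_zero _ (by simpa using hne 1 one_pos))
            (pow_ne_zero _ (hne a (by omega)))) (hne (a + 1) (by omega)),
        natDegree_mul (pow_ne_zero _ (by simpa using hne 1 one_pos))
          (pow_ne_zero _ (hne a (by omega))),
        natDegree_pow, natDegree_pow, natDegree_prod _ _ fun i hi => by
          rw [Finset.mem_Icc] at hi
          exact pow_ne_zero _ (hne i (by omega))]
      have h1 : ((1 : ℤ[X]) - X).natDegree = 1 := by simpa using hnd 1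
      rw [h1, hnd a, hnd (a + 1)]
      rw [Finset.sum_congr rfl (fun i _ => by rw [natDegree_pow, hnd i]),
        ← Finset.mul_sum]
    have hsum : (∑ i ∈ Finset.Icc 2 (a - 1), i) * 2 = a * (a - 1) - 2 := by
      have hins : Finset.range a = insert 0 (insert 1 (Finset.Icc 2 (a - 1))) := by
        ext x
        simp only [Finset.mem_range, Finset.mem_Icc, Finset.mem_insert]
        omega
      have h0n : (0 : ℕ) ∉ insert 1 (Finset.Icc 2 (a - 1)) := by simp
      have h1n : (1 : ℕ) ∉ Finset.Icc 2 (a - 1) := by simp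
      have hg := Finset.sum_range_id_mul_two a
      rw [hins, Finset.sum_insert h0n, Finset.sum_insert h1n] at hg
      omega
    have htot : natDegree ((1 - X ^ ℓ) ^ (3 * a - 1) : ℤ[X]) = ℓ * (3 * a - 1) := by
      rw [natDegree_pow, hnd ℓ, Nat.mul_comm]
    have hsq : a * (a - 1) + a = a ^ 2 := by
      obtain ⟨n, rfl⟩ : ∃ n, a = n + 1 := ⟨a - 1, by omega⟩
      simp only [Nat.add_sub_cancel]
      ring
    have hd2 : 2 * 1 ≤ a * (a - 1) := Nat.mul_le_mul ha (by omega)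
    have hEdeg2 : E.natDegree = 3 * (a ^ 2 + a) / 2 := by omega
    have := natDegree_mul hEne hQmonic.ne_zero
    rw [hfac, htot, hEdeg2] at this
    obtain ⟨T, hT⟩ : ∃ T, ℓ * (3 * a - 1) = T := ⟨_, rfl⟩
    rw [hT] at this ⊢
    omega
  · intro d hd
    have hDpos : ∀ i, d ∈ D i → 0 < d := by
      intro i hdi
      rw [hD] at hdi
      rw [Finset.mem_val, Finset.mem_sdiff] at hdi
      exact Nat.pos_of_mem_divisors hdi.1
    rw [hS] at hd
    simp only [Multiset.mem_add, Multiset.mem_nsmul, Multiset.mem_sum] at hd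
    rcases hd with h | h | h | ⟨i, _, h⟩
    · exact hDpos 1 h.2
    · exact hDpos a h.2
    · exact hDpos (a+1) h
    · exact hDpos i h.2
end

section
/- Let a ≥ 1 and k ≥ 1. The total number of Kronecker tableaux of shape (3k, k^a)/α and type (3k, k^a)/α, summed over all partitions α of k with at most a+1 parts, equals the number of coloured partitions of k with parts in B_a. -/
/-- Number of coloured partitions of `k` with parts in
`B_a = {1̄, 2, 2̄, …, a, ā, a+1}`: the barred colours have weights `1, …, a`
(indexed by `Fin a`, index `i` having weight `i+1`) and the unbarred colours have
weights `2, …, a+1` (indexed by `Fin a`, index `i` having weight `i+2`). -/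
noncomputable def colouredB (a k : ℕ) : ℕ :=
  Nat.card {p : (Fin a → ℕ) × (Fin a → ℕ) //
    (∑ i : Fin a, ((i : ℕ) + 1) * p.1 i) + (∑ i : Fin a, ((i : ℕ) + 2) * p.2 i) = k}

/-- The cells of the skew shape `λ/α`, with rows and columns indexed from `0`:
cell `(i, j)` belongs to `λ/α` iff `α i ≤ j < λ i`. -/
def skewCells (lam alpha : ℕ → ℕ) : Set (ℕ × ℕ) :=
  {p | alpha p.1 ≤ p.2 ∧ p.2 < lam p.1}

/-- The number of cells of `S` in which the filling `T` has entry `v`. -/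
noncomputable def entryCount (T : ℕ × ℕ → ℕ) (S : Set (ℕ × ℕ)) (v : ℕ) : ℕ :=
  Nat.card {p : ℕ × ℕ // p ∈ S ∧ T p = v}

/-- The set of cells giving an initial segment of the reverse reading word of a
filling of `λ/α` (rows read right to left, from the top row downwards): all cells in
rows `< r`, together with the cells in row `r` lying in columns `≥ c`. -/
def rrwPrefix (lam alpha : ℕ → ℕ) (r c : ℕ) : Set (ℕ × ℕ) :=
  {p | p ∈ skewCells lam alpha ∧ (p.1 < r ∨ (p.1 = r ∧ c ≤ p.2))}

/-- `T` is a Kronecker tableau of shape `λ/α` and type `ν/α` (all partitions indexed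
from `0`, so `lam 0` is the first part, etc.; `T` is required to vanish outside the
skew shape):
* `α ⊆ λ ∩ ν`;
* `T` is a semistandard filling: positive entries, weakly increasing along rows,
  strictly increasing down columns;
* the entry `v+1` occurs exactly `ν_{v+1} − α_{v+1}` times (type condition);
* every initial segment of the reverse reading word is an `α`-lattice permutation;
* the `α`-condition: `α₁ = α₂`, or `α₁ > α₂` and (the number of `1`'s in the second
  row equals `α₁ − α₂`, or the number of `2`'s in the first row equals `α₁ − α₂`). -/
def IsKroneckerTableau (lam nu alpha : ℕ → ℕ) (T : ℕ × ℕ → ℕ) : Prop :=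
  (∀ i, alpha i ≤ lam i ∧ alpha i ≤ nu i) ∧
  (∀ p, p ∉ skewCells lam alpha → T p = 0) ∧
  (∀ p ∈ skewCells lam alpha, 1 ≤ T p) ∧
  (∀ i j j', (i, j) ∈ skewCells lam alpha → (i, j') ∈ skewCells lam alpha → j ≤ j' →
    T (i, j) ≤ T (i, j')) ∧
  (∀ i i' j, (i, j) ∈ skewCells lam alpha → (i', j) ∈ skewCells lam alpha → i < i' →
    T (i, j) < T (i', j)) ∧
  (∀ v : ℕ, entryCount T (skewCells lam alpha) (v + 1) = nu v - alpha v) ∧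
  (∀ r c v : ℕ,
    entryCount T (rrwPrefix lam alpha r c) (v + 2) + alpha (v + 1) ≤
      entryCount T (rrwPrefix lam alpha r c) (v + 1) + alpha v) ∧
  (alpha 0 = alpha 1 ∨
    (alpha 1 < alpha 0 ∧
      (entryCount T {p | p ∈ skewCells lam alpha ∧ p.1 = 1} 1 = alpha 0 - alpha 1 ∨
        entryCount T {p | p ∈ skewCells lam alpha ∧ p.1 = 0} 2 = alpha 0 - alpha 1)))

/-- The partition `(c, k, k, …, k)` with `a` copies of `k`, as a function `ℕ → ℕ`
indexed from `0`. -/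
def hookRect (c k a : ℕ) : ℕ → ℕ :=
  fun i => if i = 0 then c else if i < a + 1 then k else 0

open Finset in
/-- telescoping double sum -/
lemma sum_Ico_telescope (n : ℕ) (f : ℕ → ℕ) :
    ∑ i ∈ range n, ∑ j ∈ Finset.Ico i n, f j = ∑ j ∈ range n, (j + 1) * f j := by
  induction n with
  | zero => simp
  | succ n ih =>
    rw [Finset.sum_range_succ, Finset.sum_range_succ]
    have h1 : ∀ i ∈ range n, ∑ j ∈ Finset.Ico i (n+1), f j
        = (∑ j ∈ Finset.Ico i n, f j) + f n := by
      intro i hi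
      rw [Finset.sum_Ico_succ_top (by simpa using (mem_range.mp hi).le)]
    rw [Finset.sum_congr rfl h1, Finset.sum_add_distrib, ih, Finset.sum_const,
      card_range, smul_eq_mul, Nat.Ico_succ_singleton, Finset.sum_singleton]
    ring

open Finset in
/-- ncard of a union of row intervals -/
lemma ncard_rowUnion (n : ℕ) (F G : ℕ → ℕ) :
    ({p : ℕ × ℕ | p.1 < n ∧ F p.1 ≤ p.2 ∧ p.2 < G p.1} : Set (ℕ × ℕ)).ncard
      = ∑ ρ ∈ range n, (G ρ - F ρ) := by
  have hset : ({p : ℕ × ℕ | p.1 < n ∧ F p.1 ≤ p.2 ∧ p.2 < G p.1} : Set (ℕ × ℕ))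
      = ↑((range n).biUnion (fun ρ => {ρ} ×ˢ Finset.Ico (F ρ) (G ρ))) := by
    ext ⟨i, j⟩
    simp only [Set.mem_setOf_eq, Finset.coe_biUnion, Set.mem_iUnion, Finset.mem_coe,
      Finset.mem_product, Finset.mem_singleton, Finset.mem_Ico, Finset.mem_range]
    constructor
    · rintro ⟨h1, h2, h3⟩; exact ⟨i, h1, rfl, h2, h3⟩
    · rintro ⟨ρ, h1, rfl, h2, h3⟩; exact ⟨h1, h2, h3⟩
  rw [hset, Set.ncard_coe_finset, Finset.card_biUnion]
  · apply Finset.sum_congr rfl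
    intro ρ _
    simp [Finset.card_product]
  · intro x _ y _ hxy
    simp only [Finset.disjoint_left]
    rintro ⟨i, j⟩ h1 h2
    simp only [Finset.mem_product, Finset.mem_singleton] at h1 h2
    exact hxy (h1.1.symm.trans h2.1)

lemma entryCount_eq_ncard (T : ℕ × ℕ → ℕ) (S : Set (ℕ × ℕ)) (v : ℕ) :
    entryCount T S v = ({p | p ∈ S ∧ T p = v} : Set (ℕ × ℕ)).ncard :=
  Nat.card_coe_set_eq _

/-- one row interval -/
lemma ncard_oneRow (r A B : ℕ) :
    ({p : ℕ × ℕ | p.1 = r ∧ A ≤ p.2 ∧ p.2 < B} : Set (ℕ × ℕ)).ncard = B - A := by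
  have h : ({p : ℕ × ℕ | p.1 = r ∧ A ≤ p.2 ∧ p.2 < B} : Set (ℕ × ℕ))
      = ↑(({r} : Finset ℕ) ×ˢ Finset.Ico A B) := by
    ext ⟨i, j⟩
    simp only [Set.mem_setOf_eq, Finset.coe_product, Set.mem_prod, Finset.coe_singleton,
      Set.mem_singleton_iff, Finset.coe_Ico, Set.mem_Ico] <;> tauto
  rw [h, Set.ncard_coe_finset, Finset.card_product, Finset.card_singleton, Nat.card_Ico,
    one_mul]

lemma finite_oneRow (r A B : ℕ) :
    ({p : ℕ × ℕ | p.1 = r ∧ A ≤ p.2 ∧ p.2 < B} : Set (ℕ × ℕ)).Finite := by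
  have h : ({p : ℕ × ℕ | p.1 = r ∧ A ≤ p.2 ∧ p.2 < B} : Set (ℕ × ℕ))
      = ↑(({r} : Finset ℕ) ×ˢ Finset.Ico A B) := by
    ext ⟨i, j⟩
    simp only [Set.mem_setOf_eq, Finset.coe_product, Set.mem_prod, Finset.coe_singleton,
      Set.mem_singleton_iff, Finset.coe_Ico, Set.mem_Ico] <;> tauto
  rw [h]; exact (({r} : Finset ℕ) ×ˢ Finset.Ico A B).finite_toSet

/-- two row intervals -/
lemma ncard_twoRows (r₁ r₂ A B C D : ℕ) (h : r₁ ≠ r₂) :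
    ({p : ℕ × ℕ | (p.1 = r₁ ∧ A ≤ p.2 ∧ p.2 < B) ∨ (p.1 = r₂ ∧ C ≤ p.2 ∧ p.2 < D)} :
      Set (ℕ × ℕ)).ncard = (B - A) + (D - C) := by
  have hu : ({p : ℕ × ℕ | (p.1 = r₁ ∧ A ≤ p.2 ∧ p.2 < B) ∨ (p.1 = r₂ ∧ C ≤ p.2 ∧ p.2 < D)} :
      Set (ℕ × ℕ))
      = {p : ℕ × ℕ | p.1 = r₁ ∧ A ≤ p.2 ∧ p.2 < B} ∪ {p | p.1 = r₂ ∧ C ≤ p.2 ∧ p.2 < D} := rfl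
  rw [hu, Set.ncard_union_eq ?hd (finite_oneRow _ _ _) (finite_oneRow _ _ _),
    ncard_oneRow, ncard_oneRow]
  case hd =>
    rw [Set.disjoint_left]; rintro ⟨i, j⟩ h1 h2
    exact h (h1.1.symm.trans h2.1)

open Finset in
/-- downward-closed filters of `Ico lo hi` are initial segments -/
lemma filter_initial (P : ℕ → Prop) [DecidablePred P] (lo hi : ℕ)
    (hdc : ∀ j j', lo ≤ j' → j' ≤ j → j < hi → P j → P j') :
    (Finset.Ico lo hi).filter P
      = Finset.Ico lo (lo + ((Finset.Ico lo hi).filter P).card) := by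
  induction hi with
  | zero => simp
  | succ n ih =>
    by_cases hlo : lo ≤ n
    · by_cases hP : P n
      · have hall : (Finset.Ico lo (n+1)).filter P = Finset.Ico lo (n+1) := by
          apply Finset.filter_true_of_mem
          intro j hj
          simp only [Finset.mem_Ico] at hj
          exact hdc n j hj.1 (by omega) (by omega) hP
        rw [hall]
        congr 1
        rw [Nat.card_Ico]; omega
      · have hsame : (Finset.Ico lo (n+1)).filter P = (Finset.Ico lo n).filter P := by
          have : Finset.Ico lo (n+1) = insert n (Finset.Ico lo n) := by
            rw [Finset.Ico_insert_right ?h]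
            · rw [Finset.Ico_add_one_right_eq_Icc]
            · omega
          rw [this, Finset.filter_insert, if_neg hP]
        rw [hsame]
        exact ih (fun j j' h1 h2 h3 hPj => hdc j j' h1 h2 (by omega) hPj)
    · have h0 : Finset.Ico lo (n+1) = ∅ := by
        rw [Finset.Ico_eq_empty_iff]; omega
      simp [h0]
/-! ## Parameter data and the constructed tableau -/

/-- Parameter data for the classification. -/
structure MidP (a k : ℕ) (al m : ℕ → ℕ) : Prop where
  dec : ∀ i, al (i+1) ≤ al i
  supp : ∀ i, a + 1 ≤ i → al i = 0
  sumk : ∑ i ∈ Finset.range (a+1), al i = k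
  m1 : m 1 = al 0 - al 1
  mle : ∀ r, 2 ≤ r → r ≤ a → m r ≤ al (r-1) - al r
  msupp : ∀ r, r = 0 ∨ a + 1 ≤ r → m r = 0

/-- suffix sums of `m` -/
def Sfn (a : ℕ) (m : ℕ → ℕ) (i : ℕ) : ℕ := ∑ r ∈ Finset.Ico i (a+1), m r

/-- the value of the constructed tableau in row `0`, column `j` -/
def rowZeroVal (a k : ℕ) (m : ℕ → ℕ) (j : ℕ) : ℕ :=
  1 + ((Finset.Icc 1 a).filter (fun r => 3*k - Sfn a m r ≤ j)).card

/-- the constructed tableau -/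
def Tb (a k : ℕ) (al m : ℕ → ℕ) : ℕ × ℕ → ℕ := fun p =>
  if p.1 = 0 then (if al 0 ≤ p.2 ∧ p.2 < 3*k then rowZeroVal a k m p.2 else 0)
  else if p.1 ≤ a ∧ al p.1 ≤ p.2 ∧ p.2 < k then
    (if p.2 < al p.1 + m p.1 then 1 else p.1 + 1) else 0

section Forward

variable {a k : ℕ} {al m : ℕ → ℕ}

lemma al_anti (hM : MidP a k al m) : ∀ i j, i ≤ j → al j ≤ al i := by
  intro i j hij
  induction j with
  | zero => have h0 : i = 0 := by omega
            rw [h0]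
  | succ n ih =>
    rcases Nat.lt_or_ge i (n+1) with h | h
    · exact (hM.dec n).trans (ih (by omega))
    · have h0 : i = n+1 := by omega
      rw [h0]

lemma al_le_k (hM : MidP a k al m) : ∀ i, al i ≤ k := by
  intro i
  rcases Nat.lt_or_ge i (a+1) with h | h
  · calc al i ≤ ∑ i ∈ Finset.range (a+1), al i :=
        Finset.single_le_sum (fun _ _ => Nat.zero_le _) (Finset.mem_range.mpr h)
    _ = k := hM.sumk
  · rw [hM.supp i h]; omega

lemma alm_le (hM : MidP a k al m) : ∀ r, 1 ≤ r → r ≤ a → al r + m r ≤ al (r-1) := by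
  intro r h1 h2
  rcases Nat.lt_or_ge r 2 with h | h
  · have : r = 1 := by omega
    subst this
    have e1 := hM.m1
    have e2 := hM.dec 0
    simp only [Nat.zero_add] at e2
    simp only [show (1:ℕ)-1 = 0 from rfl]
    omega
  · have e1 := hM.mle r h h2
    have e2 : al r ≤ al (r-1) := al_anti hM (r-1) r (by omega)
    omega

lemma Sfn_zero_of_ge : ∀ i, a + 1 ≤ i → Sfn a m i = 0 := by
  intro i h
  unfold Sfn
  rw [Finset.Ico_eq_empty (by omega), Finset.sum_empty]

lemma Sfn_step : ∀ i, i ≤ a → Sfn a m i = m i + Sfn a m (i+1) := by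
  intro i h
  unfold Sfn
  rw [← Finset.sum_eq_sum_Ico_succ_bot (by omega)]

lemma Sfn_anti : ∀ i j, i ≤ j → Sfn a m j ≤ Sfn a m i := by
  intro i j hij
  exact Finset.sum_le_sum_of_subset (Finset.Ico_subset_Ico hij le_rfl)

lemma Sfn_le_al (hM : MidP a k al m) : ∀ i, 1 ≤ i → Sfn a m i ≤ al (i-1) := by
  have key : ∀ t i, 1 ≤ i → a + 1 - i ≤ t → Sfn a m i ≤ al (i-1) := by
    intro t
    induction t with
    | zero => intro i h1 h2; rw [Sfn_zero_of_ge i (by omega)]; omega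
    | succ n ih =>
      intro i h1 h2
      by_cases hc2 : a + 1 ≤ i
      · rw [Sfn_zero_of_ge i hc2]; omega
      · rw [Sfn_step i (by omega)]
        have h3 := ih (i+1) (by omega) (by omega)
        simp only [Nat.add_sub_cancel] at h3
        have h4 := alm_le hM i h1 (by omega)
        omega
  intro i h1
  exact key (a+1) i h1 (by omega)

lemma Sfn1_le_k (hM : MidP a k al m) : Sfn a m 1 ≤ k := by
  have h1 := Sfn_le_al hM 1 le_rfl
  have h2 := al_le_k hM 0
  simp only [show (1:ℕ)-1 = 0 from rfl] at h1
  omega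

end Forward
section Forward2

variable {a k : ℕ} {al m : ℕ → ℕ}

lemma rzv_filter_initial (hM : MidP a k al m) (j : ℕ) :
    (Finset.Icc 1 a).filter (fun r => 3*k - Sfn a m r ≤ j)
      = Finset.Ico 1 (1 + ((Finset.Icc 1 a).filter (fun r => 3*k - Sfn a m r ≤ j)).card) := by
  have h : Finset.Icc 1 a = Finset.Ico 1 (a+1) := by
    rw [Finset.Ico_add_one_right_eq_Icc]
  rw [h]
  exact filter_initial _ 1 (a+1)
    (fun r r' h1 h2 h3 hP => by
      have := Sfn_anti (m := m) (a := a) r' r h2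
      omega)

lemma rzv_spec (hM : MidP a k al m) (j : ℕ) (hj : j < 3*k) :
    1 ≤ rowZeroVal a k m j ∧ rowZeroVal a k m j ≤ a+1 ∧
    (rowZeroVal a k m j = 1 ∨ 3*k - Sfn a m (rowZeroVal a k m j - 1) ≤ j) ∧
    j < 3*k - Sfn a m (rowZeroVal a k m j) := by
  set P : ℕ → Prop := fun r => 3*k - Sfn a m r ≤ j with hP
  set c := ((Finset.Icc 1 a).filter (fun r => 3*k - Sfn a m r ≤ j)).card with hc
  have hfil := rzv_filter_initial hM j
  have hrzv : rowZeroVal a k m j = 1 + c := rfl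
  have hcle : c ≤ a := by
    calc c ≤ (Finset.Icc 1 a).card := Finset.card_filter_le _ _
    _ = a := by rw [Nat.card_Icc]; omega
  have hmem : ∀ r, (1 ≤ r ∧ r ≤ a ∧ 3*k - Sfn a m r ≤ j) ↔ (1 ≤ r ∧ r < 1 + c) := by
    intro r
    constructor
    · intro ⟨h1, h2, h3⟩
      have : r ∈ Finset.Ico 1 (1 + c) := by
        rw [hc, ← hfil]
        simp only [Finset.mem_filter, Finset.mem_Icc]
        exact ⟨⟨h1, h2⟩, h3⟩
      simp only [Finset.mem_Ico] at this
      exact this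
    · intro ⟨h1, h2⟩
      have : r ∈ (Finset.Icc 1 a).filter (fun r => 3*k - Sfn a m r ≤ j) := by
        rw [hfil, ← hc]
        simp only [Finset.mem_Ico]
        exact ⟨h1, h2⟩
      simp only [Finset.mem_filter, Finset.mem_Icc] at this
      exact ⟨this.1.1, this.1.2, this.2⟩
  refine ⟨by omega, by omega, ?_, ?_⟩
  · rcases Nat.eq_zero_or_pos c with h0 | h0
    · left; omega
    · right
      have := (hmem c).mpr ⟨h0, by omega⟩
      rw [hrzv]
      simp only [Nat.add_sub_cancel_left]
      exact this.2.2
  · rw [hrzv]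
    rcases Nat.lt_or_ge c a with hca | hca
    · -- 1 + c ≤ a : show ¬ P (1+c)
      by_contra hcon
      push_neg at hcon
      have := (hmem (1+c)).mp ⟨by omega, by omega, by omega⟩
      omega
    · have hcaeq : c = a := by omega
      rw [hcaeq, show 1 + a = a + 1 by omega, Sfn_zero_of_ge (a+1) le_rfl]
      omega

lemma rzv_unique (hM : MidP a k al m) (j e : ℕ) (hj : j < 3*k) (he1 : 1 ≤ e) (hea : e ≤ a+1)
    (hlo : e = 1 ∨ 3*k - Sfn a m (e-1) ≤ j) (hhi : j < 3*k - Sfn a m e) :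
    rowZeroVal a k m j = e := by
  obtain ⟨s1, s2, s3, s4⟩ := rzv_spec hM j hj
  set v := rowZeroVal a k m j with hv
  by_contra hne
  rcases Nat.lt_or_ge v e with h | h
  · -- v < e, so v ≤ e - 1, Sfn (e-1) ≤ Sfn v
    have he : e ≠ 1 := by omega
    have hlo' := hlo.resolve_left he
    have := Sfn_anti (m := m) (a := a) v (e-1) (by omega)
    omega
  · have hv1 : v ≠ 1 := by omega
    have hlo'' := s3.resolve_left hv1
    have := Sfn_anti (m := m) (a := a) e (v-1) (by omega)
    omega

/-- numeric bound: row-0 values below `3k - Sfn 1` are `1` -/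
lemma rzv_one (hM : MidP a k al m) (j : ℕ) (hj : j < 3*k - Sfn a m 1) :
    rowZeroVal a k m j = 1 := by
  have h1 := Sfn1_le_k hM
  exact rzv_unique hM j 1 (by omega) le_rfl (by omega) (Or.inl rfl) (by simpa using hj)

end Forward2
section Forward3

variable {a k : ℕ} {al m : ℕ → ℕ}

lemma hookRect_zero (c k' a' : ℕ) : hookRect c k' a' 0 = c := by simp [hookRect]

lemma hookRect_mid (c k' a' i : ℕ) (h1 : 1 ≤ i) (h2 : i ≤ a') : hookRect c k' a' i = k' := by
  simp only [hookRect]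
  rw [if_neg (by omega), if_pos (by omega)]

lemma hookRect_big (c k' a' i : ℕ) (h : a' + 1 ≤ i) : hookRect c k' a' i = 0 := by
  simp only [hookRect]
  rw [if_neg (by omega), if_neg (by omega)]

lemma Tb_eval0 (j : ℕ) (h : al 0 ≤ j ∧ j < 3*k) :
    Tb a k al m (0, j) = rowZeroVal a k m j := by
  unfold Tb
  rw [if_pos rfl, if_pos h]

lemma Tb_eval0' (j : ℕ) (h : ¬(al 0 ≤ j ∧ j < 3*k)) :
    Tb a k al m (0, j) = 0 := by
  unfold Tb
  rw [if_pos rfl, if_neg h]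

lemma Tb_evalr (i j : ℕ) (hi : i ≠ 0) (h : i ≤ a ∧ al i ≤ j ∧ j < k) :
    Tb a k al m (i, j) = if j < al i + m i then 1 else i + 1 := by
  unfold Tb
  rw [if_neg hi, if_pos h]

lemma Tb_evalr' (i j : ℕ) (hi : i ≠ 0) (h : ¬(i ≤ a ∧ al i ≤ j ∧ j < k)) :
    Tb a k al m (i, j) = 0 := by
  unfold Tb
  rw [if_neg hi, if_neg h]

lemma Tb_char1 (hM : MidP a k al m) (i j : ℕ) :
    Tb a k al m (i, j) = 1 ↔
      (i = 0 ∧ al 0 ≤ j ∧ j < 3*k - Sfn a m 1) ∨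
      (1 ≤ i ∧ i ≤ a ∧ al i ≤ j ∧ j < al i + m i) := by
  have hs := Sfn1_le_k hM
  by_cases hi : i = 0
  · subst hi
    by_cases hin : al 0 ≤ j ∧ j < 3*k
    · rw [Tb_eval0 j hin]
      constructor
      · intro h
        obtain ⟨s1, s2, s3, s4⟩ := rzv_spec hM j hin.2
        rw [h] at s4
        exact Or.inl ⟨rfl, hin.1, s4⟩
      · rintro (⟨-, -, h3⟩ | ⟨h1, -⟩)
        · exact rzv_one hM j h3
        · exfalso; omega
    · rw [Tb_eval0' j hin]
      constructor
      · intro h; exfalso; omega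
      · rintro (⟨-, h2, h3⟩ | ⟨h1, -⟩) <;> (exfalso; omega)
  · by_cases hin : i ≤ a ∧ al i ≤ j ∧ j < k
    · rw [Tb_evalr i j hi hin]
      by_cases hj : j < al i + m i
      · rw [if_pos hj]
        simp only [true_iff]
        exact Or.inr ⟨by omega, hin.1, hin.2.1, hj⟩
      · rw [if_neg hj]
        constructor
        · intro h; exfalso; omega
        · rintro (⟨h1, -⟩ | ⟨-, -, -, h4⟩) <;> (exfalso; omega)
    · rw [Tb_evalr' i j hi hin]
      constructor
      · intro h; exfalso; omega
      · rintro (⟨h1, -⟩ | ⟨h1, h2, h3, h4⟩)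
        · exfalso; omega
        · exfalso
          have e1 := alm_le hM i h1 h2
          have e2 := al_le_k hM (i-1)
          omega

lemma Tb_chare (hM : MidP a k al m) (e : ℕ) (he2 : 2 ≤ e) (hea : e ≤ a+1) (i j : ℕ) :
    Tb a k al m (i, j) = e ↔
      (i = 0 ∧ 3*k - Sfn a m (e-1) ≤ j ∧ j < 3*k - Sfn a m e) ∨
      (i = e-1 ∧ al (e-1) + m (e-1) ≤ j ∧ j < k) := by
  have hSk : Sfn a m (e-1) ≤ k := le_trans (Sfn_anti 1 (e-1) (by omega)) (Sfn1_le_k hM)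
  have hSk2 : Sfn a m e ≤ k := le_trans (Sfn_anti 1 e (by omega)) (Sfn1_le_k hM)
  have hal0 : al 0 ≤ k := al_le_k hM 0
  by_cases hi : i = 0
  · subst hi
    by_cases hin : al 0 ≤ j ∧ j < 3*k
    · rw [Tb_eval0 j hin]
      constructor
      · intro h
        obtain ⟨s1, s2, s3, s4⟩ := rzv_spec hM j hin.2
        rw [h] at s3 s4
        exact Or.inl ⟨rfl, by omega, s4⟩
      · rintro (⟨-, h2, h3⟩ | ⟨h1, -⟩)
        · exact rzv_unique hM j e hin.2 (by omega) hea (Or.inr h2) h3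
        · exfalso; omega
    · rw [Tb_eval0' j hin]
      constructor
      · intro h; exfalso; omega
      · rintro (⟨-, h2, h3⟩ | ⟨h1, -⟩) <;> (exfalso; omega)
  · by_cases hin : i ≤ a ∧ al i ≤ j ∧ j < k
    · rw [Tb_evalr i j hi hin]
      by_cases hj : j < al i + m i
      · rw [if_pos hj]
        constructor
        · intro h; exfalso; omega
        · rintro (⟨h1, -⟩ | ⟨h1, h2, -⟩)
          · exfalso; omega
          · exfalso; rw [h1] at hj; omega
      · rw [if_neg hj]
        constructor
        · intro h
          right
          refine ⟨by omega, ?_, hin.2.2⟩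
          rw [show e - 1 = i by omega]
          omega
        · rintro (⟨h1, -⟩ | ⟨h1, h2, -⟩)
          · exfalso; omega
          · omega
    · rw [Tb_evalr' i j hi hin]
      constructor
      · intro h; exfalso; omega
      · rintro (⟨h1, -⟩ | ⟨h1, h2, h3⟩)
        · exfalso; omega
        · exfalso
          have h4 := alm_le hM (e-1) (by omega) (by omega)
          rw [h1] at hin
          omega

lemma Tb_charbig (hM : MidP a k al m) (e : ℕ) (he : a+2 ≤ e) (i j : ℕ) :
    Tb a k al m (i, j) ≠ e := by
  by_cases hi : i = 0
  · subst hi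
    by_cases hin : al 0 ≤ j ∧ j < 3*k
    · rw [Tb_eval0 j hin]
      obtain ⟨s1, s2, -, -⟩ := rzv_spec hM j hin.2
      omega
    · rw [Tb_eval0' j hin]; omega
  · by_cases hin : i ≤ a ∧ al i ≤ j ∧ j < k
    · rw [Tb_evalr i j hi hin]
      by_cases hj : j < al i + m i
      · rw [if_pos hj]; omega
      · rw [if_neg hj]; omega
    · rw [Tb_evalr' i j hi hin]; omega

lemma Tb_pos_char (hM : MidP a k al m) (i j : ℕ)
    (h : (i, j) ∈ skewCells (hookRect (3*k) k a) al) : 1 ≤ Tb a k al m (i, j) := by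
  obtain ⟨h1, h2⟩ := h
  simp only at h1 h2
  by_cases hi : i = 0
  · subst hi
    rw [hookRect_zero] at h2
    rw [Tb_eval0 j ⟨h1, h2⟩]
    obtain ⟨s1, -, -, -⟩ := rzv_spec hM j h2
    omega
  · have hia : i ≤ a := by
      by_contra hcon
      rw [hookRect_big _ _ _ i (by omega)] at h2
      omega
    rw [hookRect_mid _ _ _ i (by omega) hia] at h2
    rw [Tb_evalr i j hi ⟨hia, h1, h2⟩]
    by_cases hj : j < al i + m i
    · rw [if_pos hj]
    · rw [if_neg hj]; omega

lemma Tb_zero_outside (i j : ℕ)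
    (h : (i, j) ∉ skewCells (hookRect (3*k) k a) al) : Tb a k al m (i, j) = 0 := by
  have h' : ¬(al i ≤ j ∧ j < hookRect (3*k) k a i) := h
  by_cases hi : i = 0
  · subst hi
    rw [hookRect_zero] at h'
    exact Tb_eval0' j h'
  · refine Tb_evalr' i j hi ?_
    intro ⟨h1, h2, h3⟩
    rw [hookRect_mid _ _ _ i (by omega) h1] at h'
    exact h' ⟨h2, h3⟩

end Forward3
/-- row contribution to a prefix count -/
def rcf (r c ρ lo hi : ℕ) : ℕ :=
  if ρ < r then hi - lo else if ρ = r then hi - max lo c else 0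

section Forward4

variable {a k : ℕ} {al m : ℕ → ℕ}

lemma prefix_top (c : ℕ) :
    rrwPrefix (hookRect (3*k) k a) al (a+1) c = skewCells (hookRect (3*k) k a) al := by
  ext ⟨i, j⟩
  simp only [rrwPrefix, Set.mem_setOf_eq]
  constructor
  · exact fun h => h.1
  · intro h
    refine ⟨h, Or.inl ?_⟩
    by_contra hcon
    have := h.2
    rw [hookRect_big _ _ _ i (by omega)] at this
    omega

lemma count_prefix_e (hM : MidP a k al m) (hk : 1 ≤ k) (e : ℕ) (he2 : 2 ≤ e)
    (hea : e ≤ a+1) (r c : ℕ) :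
    entryCount (Tb a k al m) (rrwPrefix (hookRect (3*k) k a) al r c) e
      = rcf r c 0 (3*k - Sfn a m (e-1)) (3*k - Sfn a m e)
        + rcf r c (e-1) (al (e-1) + m (e-1)) k := by
  have hSk : Sfn a m (e-1) ≤ k := le_trans (Sfn_anti 1 (e-1) (by omega)) (Sfn1_le_k hM)
  have hSk2 : Sfn a m e ≤ k := le_trans (Sfn_anti 1 e (by omega)) (Sfn1_le_k hM)
  have hSan : Sfn a m e ≤ Sfn a m (e-1) := Sfn_anti (e-1) e (by omega)
  have hal0 : al 0 ≤ k := al_le_k hM 0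
  have halm : al (e-1) + m (e-1) ≤ k := by
    have h1 := alm_le hM (e-1) (by omega) (by omega)
    have h2 := al_le_k hM (e-1-1)
    omega
  set A := 3*k - Sfn a m (e-1) with hA
  set B := 3*k - Sfn a m e with hB
  set C := al (e-1) + m (e-1) with hC
  rw [entryCount_eq_ncard]
  have hset : {p | p ∈ rrwPrefix (hookRect (3*k) k a) al r c ∧ Tb a k al m p = e}
      = {p : ℕ × ℕ | (p.1 = 0 ∧ (if 0 < r then A else max A c) ≤ p.2 ∧ p.2 < B) ∨
          (p.1 = e-1 ∧ (if e-1 < r then C else if e-1 = r then max C c else 1) ≤ p.2 ∧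
            p.2 < (if e-1 ≤ r then k else 0))} := by
    ext ⟨i, j⟩
    simp only [Set.mem_setOf_eq, rrwPrefix, skewCells]
    rw [Tb_chare hM e he2 hea i j]
    constructor
    · rintro ⟨⟨⟨hsk1, hsk2⟩, hpre⟩, hTb⟩
      rcases hTb with ⟨h1, h2, h3⟩ | ⟨h1, h2, h3⟩
      · subst h1
        left
        refine ⟨rfl, ?_, h3⟩
        split_ifs <;> omega
      · subst h1
        right
        refine ⟨rfl, ?_, ?_⟩ <;> (split_ifs <;> omega)
    · rintro (⟨h1, h2, h3⟩ | ⟨h1, h2, h3⟩)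
      · subst h1
        have hj1 : A ≤ j := by split_ifs at h2 <;> omega
        refine ⟨⟨⟨?_, ?_⟩, ?_⟩, ?_⟩
        · show al 0 ≤ j
          omega
        · show j < hookRect (3*k) k a 0
          rw [hookRect_zero]; omega
        · show 0 < r ∨ 0 = r ∧ c ≤ j
          split_ifs at h2 <;> omega
        · exact Or.inl ⟨rfl, hj1, h3⟩
      · subst h1
        have hcon : (e-1 < r ∨ e-1 = r) := by
          by_contra hcc
          push_neg at hcc
          rw [if_neg (by omega)] at h3
          omega
        have hjC : C ≤ j ∧ j < k := by
          rcases hcon with hc1 | hc1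
          · rw [if_pos hc1] at h2
            rw [if_pos (by omega)] at h3
            exact ⟨h2, h3⟩
          · rw [if_neg (by omega), if_pos hc1] at h2
            rw [if_pos (by omega)] at h3
            omega
        refine ⟨⟨⟨?_, ?_⟩, ?_⟩, ?_⟩
        · show al (e-1) ≤ j
          omega
        · show j < hookRect (3*k) k a (e-1)
          rw [hookRect_mid _ _ _ (e-1) (by omega) (by omega)]
          exact hjC.2
        · show e-1 < r ∨ e-1 = r ∧ c ≤ j
          rcases hcon with hc1 | hc1
          · exact Or.inl hc1
          · right
            refine ⟨hc1, ?_⟩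
            rw [if_neg (by omega), if_pos hc1] at h2
            omega
        · exact Or.inr ⟨rfl, hjC.1, hjC.2⟩
  rw [hset, ncard_twoRows 0 (e-1) _ _ _ _ (by omega)]
  unfold rcf
  split_ifs <;> omega

lemma count_prefix_big (hM : MidP a k al m) (e : ℕ) (he : a+2 ≤ e) (S : Set (ℕ × ℕ)) :
    entryCount (Tb a k al m) S e = 0 := by
  rw [entryCount_eq_ncard]
  convert Set.ncard_empty (ℕ × ℕ)
  ext ⟨i, j⟩
  simp only [Set.mem_setOf_eq, Set.mem_empty_iff_false, iff_false, not_and]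
  intro _
  exact Tb_charbig hM e he i j

lemma count_skew_one (hM : MidP a k al m) (hk : 1 ≤ k) :
    entryCount (Tb a k al m) (skewCells (hookRect (3*k) k a) al) 1 = 3*k - al 0 := by
  have hs1 := Sfn1_le_k hM
  have hal0 : al 0 ≤ k := al_le_k hM 0
  rw [entryCount_eq_ncard]
  have hset : {p | p ∈ skewCells (hookRect (3*k) k a) al ∧ Tb a k al m p = 1}
      = {p : ℕ × ℕ | p.1 < a+1 ∧ al p.1 ≤ p.2 ∧
          p.2 < (if p.1 = 0 then 3*k - Sfn a m 1 else al p.1 + m p.1)} := by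
    ext ⟨i, j⟩
    simp only [Set.mem_setOf_eq, skewCells]
    rw [Tb_char1 hM i j]
    constructor
    · rintro ⟨⟨hsk1, hsk2⟩, hTb⟩
      rcases hTb with ⟨h1, h2, h3⟩ | ⟨h1, h2, h3, h4⟩
      · subst h1
        rw [if_pos rfl]
        exact ⟨by omega, h2, h3⟩
      · rw [if_neg (by omega)]
        exact ⟨by omega, h3, h4⟩
    · rintro ⟨h1, h2, h3⟩
      by_cases hi : i = 0
      · subst hi
        rw [if_pos rfl] at h3
        refine ⟨⟨h2, ?_⟩, Or.inl ⟨rfl, h2, h3⟩⟩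
        show j < hookRect (3*k) k a 0
        rw [hookRect_zero]
        omega
      · rw [if_neg hi] at h3
        have halm := alm_le hM i (by omega) (by omega)
        refine ⟨⟨h2, ?_⟩, Or.inr ⟨by omega, by omega, h2, h3⟩⟩
        show j < hookRect (3*k) k a i
        rw [hookRect_mid _ _ _ i (by omega) (by omega)]
        have := al_le_k hM (i-1)
        omega
  rw [hset, ncard_rowUnion (a+1) (fun ρ => al ρ)
    (fun ρ => if ρ = 0 then 3*k - Sfn a m 1 else al ρ + m ρ)]
  rw [Finset.sum_range_succ']
  simp only [if_pos rfl, if_true, Nat.add_eq, if_neg (Nat.succ_ne_zero _)]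
  have hsum : ∑ i ∈ Finset.range a, (al (i+1) + m (i+1) - al (i+1)) = Sfn a m 1 := by
    have h1 : ∀ i ∈ Finset.range a, al (i+1) + m (i+1) - al (i+1) = m (1+i) := by
      intro i _
      rw [show 1+i = i+1 by omega]
      omega
    rw [Finset.sum_congr rfl h1]
    unfold Sfn
    rw [Finset.sum_Ico_eq_sum_range]
    simp only [Nat.add_sub_cancel]
  rw [hsum]
  omega

lemma count_row1_one (hM : MidP a k al m) (ha : 1 ≤ a) (hk : 1 ≤ k) :
    entryCount (Tb a k al m)
      {p | p ∈ skewCells (hookRect (3*k) k a) al ∧ p.1 = 1} 1 = m 1 := by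
  have halm := alm_le hM 1 le_rfl ha
  simp only [show (1:ℕ)-1 = 0 from rfl] at halm
  have hk0 := al_le_k hM 0
  rw [entryCount_eq_ncard]
  have hset : {p | p ∈ {q : ℕ × ℕ | q ∈ skewCells (hookRect (3*k) k a) al ∧ q.1 = 1} ∧ Tb a k al m p = 1}
      = {p : ℕ × ℕ | p.1 = 1 ∧ al 1 ≤ p.2 ∧ p.2 < al 1 + m 1} := by
    ext ⟨i, j⟩
    simp only [Set.mem_setOf_eq, skewCells]
    rw [Tb_char1 hM i j]
    constructor
    · rintro ⟨⟨-, hi⟩, hTb⟩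
      rcases hTb with ⟨h1, -, -⟩ | ⟨-, -, h3, h4⟩
      · exfalso; omega
      · rw [hi] at h3 h4
        exact ⟨hi, h3, h4⟩
    · rintro ⟨h1, h2, h3⟩
      subst h1
      refine ⟨⟨⟨h2, ?_⟩, rfl⟩, Or.inr ⟨le_rfl, ha, h2, h3⟩⟩
      show j < hookRect (3*k) k a 1
      rw [hookRect_mid _ _ _ 1 le_rfl ha]
      omega
  rw [hset, ncard_oneRow]
  omega

lemma count_row0_two (hM : MidP a k al m) (ha : 1 ≤ a) (hk : 1 ≤ k) :
    entryCount (Tb a k al m)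
      {p | p ∈ skewCells (hookRect (3*k) k a) al ∧ p.1 = 0} 2 = m 1 := by
  have hs1 := Sfn1_le_k hM
  have hstep : Sfn a m 1 = m 1 + Sfn a m 2 := Sfn_step (m := m) 1 ha
  rw [entryCount_eq_ncard]
  have hset : {p | p ∈ {q : ℕ × ℕ | q ∈ skewCells (hookRect (3*k) k a) al ∧ q.1 = 0} ∧ Tb a k al m p = 2}
      = {p : ℕ × ℕ | p.1 = 0 ∧ 3*k - Sfn a m 1 ≤ p.2 ∧ p.2 < 3*k - Sfn a m 2} := by
    ext ⟨i, j⟩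
    simp only [Set.mem_setOf_eq, skewCells]
    rw [Tb_chare hM 2 le_rfl (by omega) i j]
    constructor
    · rintro ⟨⟨-, hi⟩, hTb⟩
      rcases hTb with ⟨-, h2, h3⟩ | ⟨h1, -, -⟩
      · exact ⟨hi, h2, h3⟩
      · exfalso; omega
    · rintro ⟨h1, h2, h3⟩
      subst h1
      have hS2 : Sfn a m 2 ≤ Sfn a m 1 := Sfn_anti 1 2 (by omega)
      have hk0 := al_le_k hM 0
      refine ⟨⟨⟨?_, ?_⟩, rfl⟩, Or.inl ⟨rfl, h2, h3⟩⟩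
      · show al 0 ≤ j
        omega
      · show j < hookRect (3*k) k a 0
        rw [hookRect_zero]
        omega
  rw [hset, ncard_oneRow]
  omega

lemma skew_finite : (skewCells (hookRect (3*k) k a) al).Finite := by
  apply Set.Finite.subset ((Finset.range (a+1) ×ˢ Finset.range (3*k)).finite_toSet)
  rintro ⟨i, j⟩ ⟨h1, h2⟩
  simp only [Finset.coe_product, Set.mem_prod, Finset.mem_coe, Finset.mem_range]
  constructor
  · by_contra hcon
    rw [hookRect_big _ _ _ i (by omega)] at h2
    omega
  · rcases Nat.eq_zero_or_pos i with h | h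
    · rw [h, hookRect_zero] at h2; omega
    · by_cases hia : i ≤ a
      · rw [hookRect_mid _ _ _ i h hia] at h2; omega
      · rw [hookRect_big _ _ _ i (by omega)] at h2; omega

lemma count_one_lb (hM : MidP a k al m) (hk : 1 ≤ k) (r c : ℕ) (hr : 1 ≤ r) :
    3*k - Sfn a m 1 - al 0
      ≤ entryCount (Tb a k al m) (rrwPrefix (hookRect (3*k) k a) al r c) 1 := by
  have hs1 := Sfn1_le_k hM
  have hk0 := al_le_k hM 0
  rw [entryCount_eq_ncard]
  have hsub : {p : ℕ × ℕ | p.1 = 0 ∧ al 0 ≤ p.2 ∧ p.2 < 3*k - Sfn a m 1}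
      ⊆ {p | p ∈ rrwPrefix (hookRect (3*k) k a) al r c ∧ Tb a k al m p = 1} := by
    rintro ⟨i, j⟩ ⟨h1, h2, h3⟩
    subst h1
    refine ⟨⟨⟨h2, ?_⟩, Or.inl hr⟩, ?_⟩
    · show j < hookRect (3*k) k a 0
      rw [hookRect_zero]; omega
    · rw [Tb_char1 hM 0 j]
      exact Or.inl ⟨rfl, h2, h3⟩
  calc 3*k - Sfn a m 1 - al 0
      = ({p : ℕ × ℕ | p.1 = 0 ∧ al 0 ≤ p.2 ∧ p.2 < 3*k - Sfn a m 1}).ncard := by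
        rw [ncard_oneRow]
    _ ≤ _ := Set.ncard_le_ncard hsub (Set.Finite.subset skew_finite
        (fun p hp => hp.1.1))

end Forward4
section Forward5

variable {a k : ℕ} {al m : ℕ → ℕ}

lemma rzv_mono (j j' : ℕ) (h : j ≤ j') : rowZeroVal a k m j ≤ rowZeroVal a k m j' := by
  unfold rowZeroVal
  have : ((Finset.Icc 1 a).filter (fun r => 3*k - Sfn a m r ≤ j)).card
      ≤ ((Finset.Icc 1 a).filter (fun r => 3*k - Sfn a m r ≤ j')).card := by
    apply Finset.card_le_card
    intro x hx
    simp only [Finset.mem_filter] at *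
    exact ⟨hx.1, by omega⟩
  omega

theorem Tb_isKT (hM : MidP a k al m) (ha : 1 ≤ a) (hk : 1 ≤ k) :
    IsKroneckerTableau (hookRect (3*k) k a) (hookRect (3*k) k a) al (Tb a k al m) := by
  have hal0k : al 0 ≤ k := al_le_k hM 0
  have hs1 : Sfn a m 1 ≤ k := Sfn1_le_k hM
  refine ⟨?_, ?_, ?_, ?_, ?_, ?_, ?_, ?_⟩
  · -- bounds
    intro i
    rcases Nat.eq_zero_or_pos i with h | h
    · rw [h, hookRect_zero]
      constructor <;> omega
    · by_cases hia : i ≤ a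
      · rw [hookRect_mid _ _ _ i h hia]
        have := al_le_k hM i
        constructor <;> omega
      · rw [hookRect_big _ _ _ i (by omega)]
        have := hM.supp i (by omega)
        constructor <;> omega
  · -- zero outside
    rintro ⟨i, j⟩ hp
    exact Tb_zero_outside i j hp
  · -- positive
    rintro ⟨i, j⟩ hp
    exact Tb_pos_char hM i j hp
  · -- rows weakly increasing
    intro i j j' hij hij' hjj'
    obtain ⟨h1, h2⟩ := hij
    obtain ⟨h1', h2'⟩ := hij'
    simp only at h1 h2 h1' h2'
    by_cases hi : i = 0
    · subst hi
      rw [hookRect_zero] at h2 h2'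
      rw [Tb_eval0 j ⟨h1, h2⟩, Tb_eval0 j' ⟨h1', h2'⟩]
      exact rzv_mono j j' hjj'
    · have hia : i ≤ a := by
        by_contra hcon
        rw [hookRect_big _ _ _ i (by omega)] at h2
        omega
      rw [hookRect_mid _ _ _ i (by omega) hia] at h2 h2'
      rw [Tb_evalr i j hi ⟨hia, h1, h2⟩, Tb_evalr i j' hi ⟨hia, h1', h2'⟩]
      split_ifs <;> (try contradiction) <;> omega
  · -- columns strictly increasing
    intro i i' j hij hi'j hii'
    obtain ⟨h1, h2⟩ := hij
    obtain ⟨h1', h2'⟩ := hi'j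
    simp only at h1 h2 h1' h2'
    have hi'a : i' ≤ a := by
      by_contra hcon
      rw [hookRect_big _ _ _ i' (by omega)] at h2'
      omega
    rw [hookRect_mid _ _ _ i' (by omega) hi'a] at h2'
    have hup : ¬ (j < al i' + m i') := by
      have e1 := alm_le hM i' (by omega) hi'a
      have e2 : al (i'-1) ≤ al i := al_anti hM i (i'-1) (by omega)
      omega
    rw [Tb_evalr i' j (by omega) ⟨hi'a, h1', h2'⟩, if_neg hup]
    by_cases hi : i = 0
    · subst hi
      rw [hookRect_zero] at h2
      rw [Tb_eval0 j ⟨h1, h2⟩]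
      rw [rzv_one hM j (by omega)]
      omega
    · have hia : i ≤ a := by omega
      rw [hookRect_mid _ _ _ i (by omega) hia] at h2
      rw [Tb_evalr i j hi ⟨hia, h1, h2⟩]
      split_ifs <;> (try contradiction) <;> omega
  · -- type condition
    intro v
    rcases Nat.eq_zero_or_pos v with h | h
    · rw [h, hookRect_zero]
      exact count_skew_one hM hk
    · by_cases hva : v ≤ a
      · rw [hookRect_mid _ _ _ v (by omega) hva]
        rw [← prefix_top (al := al) 0]
        rw [count_prefix_e hM hk (v+1) (by omega) (by omega)]
        simp only [Nat.add_sub_cancel]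
        have e1 := alm_le hM v (by omega) hva
        have e2 := al_le_k hM (v-1)
        have e3 : Sfn a m v = m v + Sfn a m (v+1) := Sfn_step v hva
        have e4 : Sfn a m v ≤ k := le_trans (Sfn_anti 1 v (by omega)) hs1
        unfold rcf
        split_ifs <;> (try contradiction) <;> omega
      · rw [hookRect_big _ _ _ v (by omega), hM.supp v (by omega)]
        rw [← prefix_top (al := al) 0]
        exact count_prefix_big hM (v+1) (by omega) _
  · -- lattice condition
    intro r c v
    rcases Nat.eq_zero_or_pos v with hv0 | hv0
    · -- v = 0
      subst hv0
      simp only [Nat.zero_add]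
      have hc2 := count_prefix_e hM hk 2 le_rfl (by omega) r c
      simp only [show (2:ℕ)-1 = 1 from rfl] at hc2
      have e3 : Sfn a m 1 = m 1 + Sfn a m 2 := Sfn_step 1 ha
      have e5 := hM.m1
      have e6 := hM.dec 0
      simp only [Nat.zero_add] at e6
      rcases Nat.eq_zero_or_pos r with hr | hr
      · subst hr
        rw [hc2]
        unfold rcf
        have hd0 : ¬ (0 < 0) := by omega
        have he1 : al 1 + m 1 ≤ al 0 := by
          have := alm_le hM 1 le_rfl ha
          simpa using this
        split_ifs <;> (try contradiction) <;> omega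
      · have hlb := count_one_lb hM hk r c hr
        rw [hc2]
        have he1 : al 1 + m 1 ≤ al 0 := by
          have := alm_le hM 1 le_rfl ha
          simpa using this
        unfold rcf
        split_ifs <;> (try contradiction) <;> omega
    · by_cases hva : v + 1 ≤ a
      · -- main case 1 ≤ v ≤ a-1
        have hc1 := count_prefix_e hM hk (v+1) (by omega) (by omega) r c
        have hc2 := count_prefix_e hM hk (v+2) (by omega) (by omega) r c
        simp only [Nat.add_sub_cancel] at hc1
        simp only [show ∀ n:ℕ, n+2-1 = n+1 from fun n => rfl] at hc2
        rw [hc1, hc2]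
        have e1 := alm_le hM v (by omega) (by omega)
        have e2 := alm_le hM (v+1) (by omega) hva
        simp only [Nat.add_sub_cancel] at e1 e2
        have e2' : m (v+1) ≤ al v - al (v+1) := hM.mle (v+1) (by omega) hva
        have e3 : Sfn a m v = m v + Sfn a m (v+1) := Sfn_step v (by omega)
        have e4 : Sfn a m (v+1) = m (v+1) + Sfn a m (v+2) := Sfn_step (v+1) hva
        have e5 : Sfn a m v ≤ k := le_trans (Sfn_anti 1 v (by omega)) hs1
        have e6 := al_le_k hM (v-1)
        have e7 := al_le_k hM v
        have e8 : al (v+1) ≤ al v := hM.dec v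
        unfold rcf
        split_ifs <;> (try contradiction) <;> omega
      · -- v ≥ a
        have hz : entryCount (Tb a k al m) (rrwPrefix (hookRect (3*k) k a) al r c) (v+2) = 0 :=
          count_prefix_big hM (v+2) (by omega) _
        rw [hz]
        by_cases hva2 : v ≤ a
        · have hveq : v = a := by omega
          have : al (v+1) = 0 := hM.supp (v+1) (by omega)
          omega
        · have h1 : al (v+1) = 0 := hM.supp (v+1) (by omega)
          have h2 : al v = 0 := hM.supp v (by omega)
          omega
  · -- alpha condition
    by_cases h01 : al 0 = al 1
    · exact Or.inl h01
    · have e6 := hM.dec 0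
      simp only [Nat.zero_add] at e6
      right
      refine ⟨by omega, Or.inl ?_⟩
      rw [count_row1_one hM ha hk, hM.m1]

end Forward5
/-- bundled hypotheses for the backward direction -/
structure BH (a k : ℕ) (al : ℕ → ℕ) (T : ℕ × ℕ → ℕ) : Prop where
  ha : 1 ≤ a
  hk : 1 ≤ k
  dec : ∀ i, al (i+1) ≤ al i
  supp : ∀ i, a+1 ≤ i → al i = 0
  sumk : ∑ i ∈ Finset.range (a+1), al i = k
  kt : IsKroneckerTableau (hookRect (3*k) k a) (hookRect (3*k) k a) al T

section Backward

variable {a k : ℕ} {al : ℕ → ℕ} {T : ℕ × ℕ → ℕ}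

lemma BH.anti (h : BH a k al T) : ∀ i j, i ≤ j → al j ≤ al i := by
  intro i j hij
  induction j with
  | zero => have h0 : i = 0 := by omega
            rw [h0]
  | succ n ih =>
    rcases Nat.lt_or_ge i (n+1) with hx | hx
    · exact (h.dec n).trans (ih (by omega))
    · have h0 : i = n+1 := by omega
      rw [h0]

lemma BH.le_k (h : BH a k al T) : ∀ i, al i ≤ k := by
  intro i
  rcases Nat.lt_or_ge i (a+1) with hx | hx
  · calc al i ≤ ∑ i ∈ Finset.range (a+1), al i :=
        Finset.single_le_sum (fun _ _ => Nat.zero_le _) (Finset.mem_range.mpr hx)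
    _ = k := h.sumk
  · rw [h.supp i hx]; omega

/-- characterization of the skew cells -/
lemma skew_char (h : BH a k al T) (i j : ℕ) :
    (i, j) ∈ skewCells (hookRect (3*k) k a) al ↔
      (i = 0 ∧ al 0 ≤ j ∧ j < 3*k) ∨ (1 ≤ i ∧ i ≤ a ∧ al i ≤ j ∧ j < k) := by
  constructor
  · rintro ⟨h1, h2⟩
    simp only at h1 h2
    rcases Nat.eq_zero_or_pos i with hx | hx
    · subst hx
      rw [hookRect_zero] at h2
      exact Or.inl ⟨rfl, h1, h2⟩
    · by_cases hia : i ≤ a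
      · rw [hookRect_mid _ _ _ i hx hia] at h2
        exact Or.inr ⟨hx, hia, h1, h2⟩
      · rw [hookRect_big _ _ _ i (by omega)] at h2
        omega
  · rintro (⟨h1, h2, h3⟩ | ⟨h1, h2, h3, h4⟩)
    · subst h1
      exact ⟨h2, by rw [show ((0:ℕ),j).1 = 0 from rfl, hookRect_zero]; exact h3⟩
    · refine ⟨h3, ?_⟩
      show j < hookRect (3*k) k a i
      rw [hookRect_mid _ _ _ i h1 h2]
      exact h4

/-- entry-count zero means no such entries -/
lemma count_zero_iff (h : BH a k al T) (S : Set (ℕ × ℕ))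
    (hS : S ⊆ skewCells (hookRect (3*k) k a) al) (v : ℕ) :
    entryCount T S v = 0 ↔ ∀ p ∈ S, T p ≠ v := by
  rw [entryCount_eq_ncard]
  rw [Set.ncard_eq_zero (Set.Finite.subset skew_finite (fun p hp => hS hp.1))]
  constructor
  · intro he p hp hT
    have : p ∈ ({p | p ∈ S ∧ T p = v} : Set (ℕ × ℕ)) := ⟨hp, hT⟩
    rw [he] at this
    exact this
  · intro hno
    ext p
    simp only [Set.mem_setOf_eq, Set.mem_empty_iff_false, iff_false, not_and]
    exact hno p

/-- all entries are at most `a+1` -/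
lemma entries_le (h : BH a k al T) (p : ℕ × ℕ)
    (hp : p ∈ skewCells (hookRect (3*k) k a) al) : T p ≤ a + 1 := by
  by_contra hcon
  push_neg at hcon
  have htype := h.kt.2.2.2.2.2.1 (T p - 1)
  rw [hookRect_big _ _ _ (T p - 1) (by omega), h.supp (T p - 1) (by omega)] at htype
  simp only [Nat.sub_self] at htype
  rw [show T p - 1 + 1 = T p by omega] at htype
  rw [count_zero_iff h _ (fun q hq => hq) (T p)] at htype
  exact htype p hp rfl

/-- in rows `1..a`, entries are at most `rowindex + 1` -/
lemma entries_le_row (h : BH a k al T) (i j : ℕ) (h1 : 1 ≤ i)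
    (hp : (i, j) ∈ skewCells (hookRect (3*k) k a) al) : T (i, j) ≤ i + 1 := by
  have hia : i ≤ a := by
    rcases (skew_char h i j).mp hp with ⟨h1', -⟩ | ⟨-, h2', -⟩
    · omega
    · exact h2'
  have hjk : j < k := by
    rcases (skew_char h i j).mp hp with ⟨h1', -⟩ | ⟨-, -, -, h4'⟩
    · omega
    · exact h4'
  have halij : al i ≤ j := by
    rcases (skew_char h i j).mp hp with ⟨h1', -, -⟩ | ⟨-, -, h3', -⟩
    · exfalso; omega
    · exact h3'
  by_contra hcon
  push_neg at hcon
  -- push down the column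
  have key : ∀ t, i + t ≤ a → i + t + 2 ≤ T (i + t, j) := by
    intro t
    induction t with
    | zero => intro _; simp only [Nat.add_zero]; omega
    | succ n ih =>
      intro hta
      have hmem1 : (i + n, j) ∈ skewCells (hookRect (3*k) k a) al := by
        rw [skew_char h]
        exact Or.inr ⟨by omega, by omega,
          le_trans (h.anti i (i+n) (by omega)) halij, hjk⟩
      have hmem2 : (i + (n+1), j) ∈ skewCells (hookRect (3*k) k a) al := by
        rw [skew_char h]
        exact Or.inr ⟨by omega, by omega,
          le_trans (h.anti i (i+(n+1)) (by omega)) halij, hjk⟩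
      have hcol := h.kt.2.2.2.2.1 (i+n) (i+(n+1)) j hmem1 hmem2 (by omega)
      have := ih (by omega)
      omega
  have hfin := key (a - i) (by omega)
  have hmem : (i + (a-i), j) ∈ skewCells (hookRect (3*k) k a) al := by
    rw [skew_char h]
    exact Or.inr ⟨by omega, by omega,
      le_trans (h.anti i (i+(a-i)) (by omega)) halij, hjk⟩
  have := entries_le h _ hmem
  omega

end Backward
section Backward2

variable {a k : ℕ} {al : ℕ → ℕ} {T : ℕ × ℕ → ℕ}

/-- the reading-suffix complementary to a prefix -/
def Suf (a k : ℕ) (al : ℕ → ℕ) (r c : ℕ) : Set (ℕ × ℕ) :=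
  skewCells (hookRect (3*k) k a) al \ rrwPrefix (hookRect (3*k) k a) al r c

lemma count_split (h : BH a k al T) (r c v : ℕ) :
    entryCount T (skewCells (hookRect (3*k) k a) al) v
      = entryCount T (rrwPrefix (hookRect (3*k) k a) al r c) v
        + entryCount T (Suf a k al r c) v := by
  rw [entryCount_eq_ncard, entryCount_eq_ncard, entryCount_eq_ncard]
  have hsp : {p | p ∈ skewCells (hookRect (3*k) k a) al ∧ T p = v}
      = {p | p ∈ rrwPrefix (hookRect (3*k) k a) al r c ∧ T p = v}
        ∪ {p | p ∈ Suf a k al r c ∧ T p = v} := by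
    ext p
    simp only [Set.mem_setOf_eq, Set.mem_union, Suf, Set.mem_diff, rrwPrefix]
    constructor
    · rintro ⟨hsk, hT⟩
      by_cases hpre : p.1 < r ∨ (p.1 = r ∧ c ≤ p.2)
      · exact Or.inl ⟨⟨hsk, hpre⟩, hT⟩
      · exact Or.inr ⟨⟨hsk, fun hc => absurd hc.2 hpre⟩, hT⟩
    · rintro (⟨⟨hsk, -⟩, hT⟩ | ⟨⟨hsk, -⟩, hT⟩) <;> exact ⟨hsk, hT⟩
  have hdisj : Disjoint {p : ℕ × ℕ | p ∈ rrwPrefix (hookRect (3*k) k a) al r c ∧ T p = v}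
      {p : ℕ × ℕ | p ∈ Suf a k al r c ∧ T p = v} := by
    rw [Set.disjoint_left]
    rintro p ⟨hp1, -⟩ ⟨hp2, -⟩
    exact hp2.2 hp1
  have hf1 : {p : ℕ × ℕ | p ∈ rrwPrefix (hookRect (3*k) k a) al r c ∧ T p = v}.Finite :=
    Set.Finite.subset (skew_finite (a := a) (k := k) (al := al))
      (fun p hp => hp.1.1)
  have hf2 : {p : ℕ × ℕ | p ∈ Suf a k al r c ∧ T p = v}.Finite :=
    Set.Finite.subset (skew_finite (a := a) (k := k) (al := al))
      (fun p hp => hp.1.1)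
  rw [hsp, Set.ncard_union_eq hdisj hf1 hf2]

lemma suffix_ineq (h : BH a k al T) (v : ℕ) (hv1 : 1 ≤ v) (hv2 : v + 1 ≤ a) (r c : ℕ) :
    entryCount T (Suf a k al r c) (v+1) ≤ entryCount T (Suf a k al r c) (v+2) := by
  have ht1 := h.kt.2.2.2.2.2.1 v
  have ht2 := h.kt.2.2.2.2.2.1 (v+1)
  rw [hookRect_mid _ _ _ v hv1 (by omega)] at ht1
  rw [hookRect_mid _ _ _ (v+1) (by omega) hv2] at ht2
  rw [show v+1+1 = v+2 by omega] at ht2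
  have hlat := h.kt.2.2.2.2.2.2.1 r c v
  have hs1 := count_split h r c (v+1)
  have hs2 := count_split h r c (v+2)
  have hk1 := h.le_k v
  have hk2 := h.le_k (v+1)
  have hd := h.dec v
  omega

/-- classification of entries in rows `1..a` -/
lemma row_vals (h : BH a k al T) : ∀ t i j, a - i ≤ t → 1 ≤ i →
    (i, j) ∈ skewCells (hookRect (3*k) k a) al → T (i, j) = 1 ∨ T (i, j) = i + 1 := by
  intro t
  induction t with
  | zero =>
    intro i j hai h1 hmem
    -- i = a (or i > a impossible)
    have hia : i ≤ a := by
      rcases (skew_char h i j).mp hmem with ⟨h1', -⟩ | ⟨-, h2', -⟩ <;> omega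
    have hie : i = a := by omega
    -- row a: entries in {1, a+1}: if 2 ≤ e ≤ a, contradiction
    have hle := entries_le_row h i j h1 hmem
    have hpos := h.kt.2.2.1 (i, j) hmem
    by_contra hcon
    push_neg at hcon
    obtain ⟨hc1, hc2⟩ := hcon
    set e := T (i, j) with he
    have he2 : 2 ≤ e := by omega
    have hea : e ≤ a := by omega
    -- suffix after including this cell
    have hmemS : (i, j) ∈ Suf a k al i (j+1) := by
      refine ⟨hmem, ?_⟩
      intro hpre
      rcases hpre.2 with hx | hx <;> omega
    have hone : 1 ≤ entryCount T (Suf a k al i (j+1)) e := by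
      rw [entryCount_eq_ncard]
      have : (i, j) ∈ ({p | p ∈ Suf a k al i (j+1) ∧ T p = e} : Set (ℕ × ℕ)) :=
        ⟨hmemS, rfl⟩
      have hfin : ({p | p ∈ Suf a k al i (j+1) ∧ T p = e} : Set (ℕ × ℕ)).Finite :=
        Set.Finite.subset skew_finite (fun p hp => hp.1.1)
      have := Set.ncard_pos hfin |>.mpr ⟨_, this⟩
      omega
    have hzero : entryCount T (Suf a k al i (j+1)) (e+1) = 0 := by
      rw [count_zero_iff h _ (fun p hp => hp.1) (e+1)]
      rintro ⟨i', j'⟩ ⟨hsk, hnpre⟩ hT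
      have hcond : ¬ (i' < i ∨ (i' = i ∧ j + 1 ≤ j')) := fun hc => hnpre ⟨hsk, hc⟩
      push_neg at hcond
      have hi'a : i' ≤ a := by
        rcases (skew_char h i' j').mp hsk with ⟨h1', -⟩ | ⟨-, h2', -⟩ <;> omega
      -- i' ≥ i = a, so i' = i
      have hi'i : i' = i := by omega
      have hj' : j' ≤ j := by omega
      subst hi'i
      have hrow := h.kt.2.2.2.1 i' j' j hsk hmem hj'
      omega
    have hsi := suffix_ineq h (e-1) (by omega) (by omega) i (j+1)
    rw [show e - 1 + 1 = e by omega, show e - 1 + 2 = e + 1 by omega] at hsi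
    omega
  | succ n ih =>
    intro i j hai h1 hmem
    have hia : i ≤ a := by
      rcases (skew_char h i j).mp hmem with ⟨h1', -⟩ | ⟨-, h2', -⟩ <;> omega
    have hle := entries_le_row h i j h1 hmem
    have hpos := h.kt.2.2.1 (i, j) hmem
    by_contra hcon
    push_neg at hcon
    obtain ⟨hc1, hc2⟩ := hcon
    set e := T (i, j) with he
    have he2 : 2 ≤ e := by omega
    have hea : e ≤ a := by omega
    have hmemS : (i, j) ∈ Suf a k al i (j+1) := by
      refine ⟨hmem, ?_⟩
      intro hpre
      rcases hpre.2 with hx | hx <;> omega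
    have hone : 1 ≤ entryCount T (Suf a k al i (j+1)) e := by
      rw [entryCount_eq_ncard]
      have hx : (i, j) ∈ ({p | p ∈ Suf a k al i (j+1) ∧ T p = e} : Set (ℕ × ℕ)) :=
        ⟨hmemS, rfl⟩
      have hfin : ({p | p ∈ Suf a k al i (j+1) ∧ T p = e} : Set (ℕ × ℕ)).Finite :=
        Set.Finite.subset skew_finite (fun p hp => hp.1.1)
      have := Set.ncard_pos hfin |>.mpr ⟨_, hx⟩
      omega
    have hzero : entryCount T (Suf a k al i (j+1)) (e+1) = 0 := by
      rw [count_zero_iff h _ (fun p hp => hp.1) (e+1)]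
      rintro ⟨i', j'⟩ ⟨hsk, hnpre⟩ hT
      have hcond : ¬ (i' < i ∨ (i' = i ∧ j + 1 ≤ j')) := fun hc => hnpre ⟨hsk, hc⟩
      push_neg at hcond
      have hi'a : i' ≤ a := by
        rcases (skew_char h i' j').mp hsk with ⟨h1', -⟩ | ⟨-, h2', -⟩ <;> omega
      rcases Nat.lt_or_ge i i' with hgt | hge
      · -- strictly below: use induction hypothesis
        have := ih i' j' (by omega) (by omega) hsk
        omega
      · have hi'i : i' = i := by omega
        have hj' : j' ≤ j := by omega
        subst hi'i
        have hrow := h.kt.2.2.2.1 i' j' j hsk hmem hj'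
        omega
    have hsi := suffix_ineq h (e-1) (by omega) (by omega) i (j+1)
    rw [show e - 1 + 1 = e by omega, show e - 1 + 2 = e + 1 by omega] at hsi
    omega

lemma row_vals' (h : BH a k al T) (i j : ℕ) (h1 : 1 ≤ i)
    (hmem : (i, j) ∈ skewCells (hookRect (3*k) k a) al) :
    T (i, j) = 1 ∨ T (i, j) = i + 1 :=
  row_vals h (a - i) i j le_rfl h1 hmem

end Backward2
section Backward3

variable {a k : ℕ} {al : ℕ → ℕ} {T : ℕ × ℕ → ℕ}

lemma count_row_eq (h : BH a k al T) (r lo hi v : ℕ)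
    (hc : ∀ j, ((r, j) ∈ skewCells (hookRect (3*k) k a) al ↔ lo ≤ j ∧ j < hi)) :
    entryCount T {p | p ∈ skewCells (hookRect (3*k) k a) al ∧ p.1 = r} v
      = ((Finset.Ico lo hi).filter (fun j => T (r, j) = v)).card := by
  rw [entryCount_eq_ncard]
  have hset : {p | p ∈ {q : ℕ × ℕ | q ∈ skewCells (hookRect (3*k) k a) al ∧ q.1 = r} ∧ T p = v}
      = ↑(({r} : Finset ℕ) ×ˢ ((Finset.Ico lo hi).filter (fun j => T (r, j) = v))) := by
    ext ⟨i, j⟩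
    simp only [Set.mem_setOf_eq, Finset.coe_product, Set.mem_prod, Finset.coe_singleton,
      Set.mem_singleton_iff, Finset.mem_coe, Finset.mem_filter, Finset.mem_Ico]
    constructor
    · rintro ⟨⟨hsk, hir⟩, hT⟩
      subst hir
      exact ⟨rfl, (hc j).mp hsk, hT⟩
    · rintro ⟨hir, hj, hT⟩
      subst hir
      exact ⟨⟨(hc j).mpr hj, rfl⟩, hT⟩
  rw [hset, Set.ncard_coe_finset, Finset.card_product, Finset.card_singleton, one_mul]

/-- the number of `1`s in row `r` -/
def mdef (a k : ℕ) (al : ℕ → ℕ) (T : ℕ × ℕ → ℕ) (r : ℕ) : ℕ :=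
  ((Finset.Ico (al r) k).filter (fun j => T (r, j) = 1)).card

lemma skew_row_r (h : BH a k al T) (r : ℕ) (h1 : 1 ≤ r) (h2 : r ≤ a) (j : ℕ) :
    ((r, j) ∈ skewCells (hookRect (3*k) k a) al ↔ al r ≤ j ∧ j < k) := by
  rw [skew_char h]
  constructor
  · rintro (⟨hx, -⟩ | ⟨-, -, h3, h4⟩)
    · exfalso; omega
    · exact ⟨h3, h4⟩
  · rintro ⟨h3, h4⟩
    exact Or.inr ⟨h1, h2, h3, h4⟩

lemma skew_row_0 (h : BH a k al T) (j : ℕ) :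
    ((0, j) ∈ skewCells (hookRect (3*k) k a) al ↔ al 0 ≤ j ∧ j < 3*k) := by
  rw [skew_char h]
  constructor
  · rintro (⟨-, h2, h3⟩ | ⟨hx, -⟩)
    · exact ⟨h2, h3⟩
    · exfalso; omega
  · rintro ⟨h2, h3⟩
    exact Or.inl ⟨rfl, h2, h3⟩

lemma ones_interval (h : BH a k al T) (r : ℕ) (h1 : 1 ≤ r) (h2 : r ≤ a) :
    (Finset.Ico (al r) k).filter (fun j => T (r, j) = 1)
      = Finset.Ico (al r) (al r + mdef a k al T r) := by
  unfold mdef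
  apply filter_initial
  intro j j' hj1 hj2 hj3 hPj
  have hm1 : (r, j') ∈ skewCells (hookRect (3*k) k a) al :=
    (skew_row_r h r h1 h2 j').mpr ⟨hj1, by omega⟩
  have hm2 : (r, j) ∈ skewCells (hookRect (3*k) k a) al :=
    (skew_row_r h r h1 h2 j).mpr ⟨by omega, hj3⟩
  have hrow := h.kt.2.2.2.1 r j' j hm1 hm2 hj2
  have hpos := h.kt.2.2.1 (r, j') hm1
  omega

lemma ones_bound (h : BH a k al T) (r : ℕ) (h1 : 1 ≤ r) (h2 : r ≤ a) :
    al r + mdef a k al T r ≤ al (r - 1) := by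
  rcases Nat.eq_zero_or_pos (mdef a k al T r) with h0 | h0
  · rw [h0]
    simpa using h.anti (r-1) r (by omega)
  · set j0 := al r + mdef a k al T r - 1 with hj0
    have hj0mem : j0 ∈ (Finset.Ico (al r) k).filter (fun j => T (r, j) = 1) := by
      rw [ones_interval h r h1 h2]
      simp only [Finset.mem_Ico]
      omega
    simp only [Finset.mem_filter, Finset.mem_Ico] at hj0mem
    obtain ⟨⟨hj1, hj2⟩, hj3⟩ := hj0mem
    by_contra hcon
    push_neg at hcon
    have hmem1 : (r - 1, j0) ∈ skewCells (hookRect (3*k) k a) al := by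
      rcases Nat.eq_zero_or_pos (r-1) with hx | hx
      · rw [hx]
        rw [skew_row_0 h]
        rw [hx] at hcon
        have := h.hk
        omega
      · rw [skew_row_r h (r-1) hx (by omega)]
        omega
    have hmem2 : (r, j0) ∈ skewCells (hookRect (3*k) k a) al :=
      (skew_row_r h r h1 h2 j0).mpr ⟨hj1, hj2⟩
    have hcol := h.kt.2.2.2.2.1 (r-1) r j0 hmem1 hmem2 (by omega)
    have hpos := h.kt.2.2.1 (r-1, j0) hmem1
    omega

lemma row_entry_char (h : BH a k al T) (r j : ℕ) (h1 : 1 ≤ r) (h2 : r ≤ a)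
    (hmem : (r, j) ∈ skewCells (hookRect (3*k) k a) al) :
    T (r, j) = if j < al r + mdef a k al T r then 1 else r + 1 := by
  obtain ⟨hj1, hj2⟩ := (skew_row_r h r h1 h2 j).mp hmem
  by_cases hj : j < al r + mdef a k al T r
  · rw [if_pos hj]
    have : j ∈ (Finset.Ico (al r) k).filter (fun j => T (r, j) = 1) := by
      rw [ones_interval h r h1 h2]
      simp only [Finset.mem_Ico]
      omega
    simp only [Finset.mem_filter] at this
    exact this.2
  · rw [if_neg hj]
    have hnot : j ∉ (Finset.Ico (al r) k).filter (fun j => T (r, j) = 1) := by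
      rw [ones_interval h r h1 h2]
      simp only [Finset.mem_Ico]
      omega
    simp only [Finset.mem_filter, Finset.mem_Ico] at hnot
    rcases row_vals' h r j h1 hmem with hv | hv
    · exfalso
      exact hnot ⟨⟨hj1, hj2⟩, hv⟩
    · exact hv

lemma count_row_r_one (h : BH a k al T) (r : ℕ) (h1 : 1 ≤ r) (h2 : r ≤ a) :
    entryCount T {p | p ∈ skewCells (hookRect (3*k) k a) al ∧ p.1 = r} 1
      = mdef a k al T r := by
  rw [count_row_eq h r (al r) k 1 (skew_row_r h r h1 h2)]
  rfl

/-- count of `r+1` in row `r` -/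
lemma count_row_r_top (h : BH a k al T) (r : ℕ) (h1 : 1 ≤ r) (h2 : r ≤ a) :
    entryCount T {p | p ∈ skewCells (hookRect (3*k) k a) al ∧ p.1 = r} (r+1)
      = k - al r - mdef a k al T r := by
  rw [count_row_eq h r (al r) k (r+1) (skew_row_r h r h1 h2)]
  have hflt : (Finset.Ico (al r) k).filter (fun j => T (r, j) = r+1)
      = Finset.Ico (al r + mdef a k al T r) k := by
    ext j
    simp only [Finset.mem_filter, Finset.mem_Ico]
    constructor
    · rintro ⟨⟨hj1, hj2⟩, hT⟩
      have := row_entry_char h r j h1 h2 ((skew_row_r h r h1 h2 j).mpr ⟨hj1, hj2⟩)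
      rw [this] at hT
      split_ifs at hT with hsp
      · exfalso; omega
      · exact ⟨by omega, hj2⟩
    · rintro ⟨hj1, hj2⟩
      have hb := ones_bound h r h1 h2
      refine ⟨⟨by omega, hj2⟩, ?_⟩
      have := row_entry_char h r j h1 h2 ((skew_row_r h r h1 h2 j).mpr ⟨by omega, hj2⟩)
      rw [this, if_neg (by omega)]
  rw [hflt, Nat.card_Ico]
  omega

end Backward3
section Backward4

variable {a k : ℕ} {al : ℕ → ℕ} {T : ℕ × ℕ → ℕ}

/-- normalized count-of-ones function -/
def mmT (a k : ℕ) (al : ℕ → ℕ) (T : ℕ × ℕ → ℕ) (r : ℕ) : ℕ :=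
  if 1 ≤ r ∧ r ≤ a then mdef a k al T r else 0

lemma count_split_row (h : BH a k al T) (v : ℕ) (h1 : 1 ≤ v) (h2 : v ≤ a) :
    entryCount T (skewCells (hookRect (3*k) k a) al) (v+1)
      = entryCount T {p | p ∈ skewCells (hookRect (3*k) k a) al ∧ p.1 = 0} (v+1)
        + entryCount T {p | p ∈ skewCells (hookRect (3*k) k a) al ∧ p.1 = v} (v+1) := by
  rw [entryCount_eq_ncard, entryCount_eq_ncard, entryCount_eq_ncard]
  have hsp : {p | p ∈ skewCells (hookRect (3*k) k a) al ∧ T p = v+1}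
      = {p | p ∈ {q : ℕ × ℕ | q ∈ skewCells (hookRect (3*k) k a) al ∧ q.1 = 0} ∧ T p = v+1}
        ∪ {p | p ∈ {q : ℕ × ℕ | q ∈ skewCells (hookRect (3*k) k a) al ∧ q.1 = v} ∧ T p = v+1} := by
    ext ⟨i, j⟩
    simp only [Set.mem_setOf_eq, Set.mem_union]
    constructor
    · rintro ⟨hsk, hT⟩
      rcases Nat.eq_zero_or_pos i with hx | hx
      · exact Or.inl ⟨⟨hsk, hx⟩, hT⟩
      · rcases row_vals' h i j hx hsk with hv | hv
        · exfalso; omega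
        · have : i = v := by omega
          exact Or.inr ⟨⟨hsk, this⟩, hT⟩
    · rintro (⟨⟨hsk, -⟩, hT⟩ | ⟨⟨hsk, -⟩, hT⟩) <;> exact ⟨hsk, hT⟩
  have hf1 : {p : ℕ × ℕ | p ∈ {q : ℕ × ℕ | q ∈ skewCells (hookRect (3*k) k a) al ∧ q.1 = 0}
      ∧ T p = v+1}.Finite :=
    Set.Finite.subset (skew_finite (a := a) (k := k) (al := al)) (fun p hp => hp.1.1)
  have hf2 : {p : ℕ × ℕ | p ∈ {q : ℕ × ℕ | q ∈ skewCells (hookRect (3*k) k a) al ∧ q.1 = v}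
      ∧ T p = v+1}.Finite :=
    Set.Finite.subset (skew_finite (a := a) (k := k) (al := al)) (fun p hp => hp.1.1)
  have hdisj : Disjoint
      {p : ℕ × ℕ | p ∈ {q : ℕ × ℕ | q ∈ skewCells (hookRect (3*k) k a) al ∧ q.1 = 0} ∧ T p = v+1}
      {p : ℕ × ℕ | p ∈ {q : ℕ × ℕ | q ∈ skewCells (hookRect (3*k) k a) al ∧ q.1 = v} ∧ T p = v+1} := by
    rw [Set.disjoint_left]
    rintro p ⟨⟨-, hp1⟩, -⟩ ⟨⟨-, hp2⟩, -⟩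
    omega
  rw [hsp, Set.ncard_union_eq hdisj hf1 hf2]

lemma count_row0_e (h : BH a k al T) (v : ℕ) (h1 : 1 ≤ v) (h2 : v ≤ a) :
    entryCount T {p | p ∈ skewCells (hookRect (3*k) k a) al ∧ p.1 = 0} (v+1)
      = mdef a k al T v := by
  have ht := h.kt.2.2.2.2.2.1 v
  rw [hookRect_mid _ _ _ v h1 h2] at ht
  have hs := count_split_row h v h1 h2
  have htop := count_row_r_top h v h1 h2
  have hb := ones_bound h v h1 h2
  have hk1 := h.le_k (v-1)
  have hk2 := h.le_k v
  omega

/-- the filter of row-0 cells with entry at most `e` -/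
lemma G_card (h : BH a k al T) :
    ∀ e, 1 ≤ e → e ≤ a+1 →
      al 0 + ((Finset.Ico (al 0) (3*k)).filter (fun j => T (0, j) ≤ e)).card
        = 3*k - Sfn a (mmT a k al T) e := by
  have hal0 : al 0 ≤ k := h.le_k 0
  have key : ∀ t e, 1 ≤ e → a + 1 - e ≤ t → e ≤ a+1 →
      al 0 + ((Finset.Ico (al 0) (3*k)).filter (fun j => T (0, j) ≤ e)).card
        = 3*k - Sfn a (mmT a k al T) e := by
    intro t
    induction t with
    | zero =>
      intro e he1 het he2
      have hee : e = a+1 := by omega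
      subst hee
      have hfull : (Finset.Ico (al 0) (3*k)).filter (fun j => T (0, j) ≤ a+1)
          = Finset.Ico (al 0) (3*k) := by
        apply Finset.filter_true_of_mem
        intro j hj
        simp only [Finset.mem_Ico] at hj
        exact entries_le h (0, j) ((skew_row_0 h j).mpr hj)
      rw [hfull, Sfn_zero_of_ge (a+1) le_rfl, Nat.card_Ico]
      omega
    | succ n ih =>
      intro e he1 het he2
      by_cases hea : e = a+1
      · subst hea
        have hfull : (Finset.Ico (al 0) (3*k)).filter (fun j => T (0, j) ≤ a+1)
            = Finset.Ico (al 0) (3*k) := by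
          apply Finset.filter_true_of_mem
          intro j hj
          simp only [Finset.mem_Ico] at hj
          exact entries_le h (0, j) ((skew_row_0 h j).mpr hj)
        rw [hfull, Sfn_zero_of_ge (a+1) le_rfl, Nat.card_Ico]
        omega
      · -- e ≤ a : split off entry e+1
        have hstep : (Finset.Ico (al 0) (3*k)).filter (fun j => T (0, j) ≤ e+1)
            = (Finset.Ico (al 0) (3*k)).filter (fun j => T (0, j) ≤ e)
              ∪ (Finset.Ico (al 0) (3*k)).filter (fun j => T (0, j) = e+1) := by
          ext j
          simp only [Finset.mem_union, Finset.mem_filter, Finset.mem_Ico]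
          constructor
          · rintro ⟨hj, hT⟩
            rcases Nat.lt_or_ge (T (0,j)) (e+1) with hx | hx
            · exact Or.inl ⟨hj, by omega⟩
            · exact Or.inr ⟨hj, by omega⟩
          · rintro (⟨hj, hT⟩ | ⟨hj, hT⟩) <;> exact ⟨hj, by omega⟩
        have hdisj : Disjoint
            ((Finset.Ico (al 0) (3*k)).filter (fun j => T (0, j) ≤ e))
            ((Finset.Ico (al 0) (3*k)).filter (fun j => T (0, j) = e+1)) := by
          rw [Finset.disjoint_left]
          intro j hj1 hj2
          simp only [Finset.mem_filter] at hj1 hj2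
          omega
        have hcount : ((Finset.Ico (al 0) (3*k)).filter (fun j => T (0, j) = e+1)).card
            = mdef a k al T e := by
          have := count_row0_e h e he1 (by omega)
          rw [count_row_eq h 0 (al 0) (3*k) (e+1) (skew_row_0 h)] at this
          exact this
        have hih := ih (e+1) (by omega) (by omega) (by omega)
        rw [hstep, Finset.card_union_of_disjoint hdisj, hcount] at hih
        have hSstep : Sfn a (mmT a k al T) e = mmT a k al T e + Sfn a (mmT a k al T) (e+1) :=
          Sfn_step e (by omega)
        have hmm : mmT a k al T e = mdef a k al T e := by
          unfold mmT
          rw [if_pos ⟨he1, by omega⟩]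
        omega
  intro e he1 he2
  exact key (a+1) e he1 (by omega) he2

lemma G_interval (h : BH a k al T) (e : ℕ) :
    (Finset.Ico (al 0) (3*k)).filter (fun j => T (0, j) ≤ e)
      = Finset.Ico (al 0)
          (al 0 + ((Finset.Ico (al 0) (3*k)).filter (fun j => T (0, j) ≤ e)).card) := by
  apply filter_initial
  intro j j' hj1 hj2 hj3 hPj
  have hm1 : (0, j') ∈ skewCells (hookRect (3*k) k a) al := (skew_row_0 h j').mpr ⟨hj1, by omega⟩
  have hm2 : (0, j) ∈ skewCells (hookRect (3*k) k a) al := (skew_row_0 h j).mpr ⟨by omega, hj3⟩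
  have hrow := h.kt.2.2.2.1 0 j' j hm1 hm2 hj2
  omega

/-- The characterization of row-0 entries. -/
lemma row0_entry_bounds (h : BH a k al T) (j : ℕ)
    (hmem : (0, j) ∈ skewCells (hookRect (3*k) k a) al) :
    1 ≤ T (0, j) ∧ T (0, j) ≤ a + 1 ∧ j < 3*k - Sfn a (mmT a k al T) (T (0, j)) ∧
      (2 ≤ T (0, j) → 3*k - Sfn a (mmT a k al T) (T (0, j) - 1) ≤ j) := by
  obtain ⟨hj1, hj2⟩ := (skew_row_0 h j).mp hmem
  have hpos := h.kt.2.2.1 (0, j) hmem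
  have hle := entries_le h (0, j) hmem
  set e := T (0, j) with he
  refine ⟨hpos, hle, ?_, ?_⟩
  · have hC := G_card h e hpos hle
    have hmemG : j ∈ (Finset.Ico (al 0) (3*k)).filter (fun j => T (0, j) ≤ e) := by
      simp only [Finset.mem_filter, Finset.mem_Ico]
      exact ⟨⟨hj1, hj2⟩, le_rfl⟩
    rw [G_interval h e] at hmemG
    simp only [Finset.mem_Ico] at hmemG
    omega
  · intro h2e
    have hC := G_card h (e-1) (by omega) (by omega)
    have hnot : j ∉ (Finset.Ico (al 0) (3*k)).filter (fun j => T (0, j) ≤ e-1) := by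
      simp only [Finset.mem_filter, Finset.mem_Ico]
      push_neg
      intro _
      omega
    rw [G_interval h (e-1)] at hnot
    simp only [Finset.mem_Ico] at hnot
    push_neg at hnot
    have := hnot hj1
    omega

/-- the parameters extracted from a Kronecker tableau satisfy `MidP` -/
lemma BH_MidP (h : BH a k al T) : MidP a k al (mmT a k al T) := by
  have hmm : ∀ r, 1 ≤ r → r ≤ a → mmT a k al T r = mdef a k al T r := by
    intro r h1 h2
    unfold mmT
    rw [if_pos ⟨h1, h2⟩]
  refine ⟨h.dec, h.supp, h.sumk, ?_, ?_, ?_⟩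
  · -- m 1 = al 0 - al 1
    rw [hmm 1 le_rfl h.ha]
    have hb := ones_bound h 1 le_rfl h.ha
    simp only [Nat.sub_self] at hb
    rcases h.kt.2.2.2.2.2.2.2 with h01 | ⟨hlt, hc⟩
    · omega
    · rcases hc with hc | hc
      · rw [count_row_r_one h 1 le_rfl h.ha] at hc
        omega
      · rw [show (2:ℕ) = 1 + 1 from rfl] at hc
        rw [count_row0_e h 1 le_rfl h.ha] at hc
        omega
  · intro r h2 hra
    rw [hmm r (by omega) hra]
    have hb := ones_bound h r (by omega) hra
    omega
  · intro r hr
    unfold mmT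
    rw [if_neg (by omega)]

/-- classification: a Kronecker tableau is the constructed one -/
theorem T_eq_Tb (h : BH a k al T) : T = Tb a k al (mmT a k al T) := by
  have hM := BH_MidP h
  funext p
  obtain ⟨i, j⟩ := p
  by_cases hmem : (i, j) ∈ skewCells (hookRect (3*k) k a) al
  · rcases Nat.eq_zero_or_pos i with hx | hx
    · subst hx
      obtain ⟨hj1, hj2⟩ := (skew_row_0 h j).mp hmem
      rw [Tb_eval0 j ⟨hj1, hj2⟩]
      obtain ⟨hb1, hb2, hb3, hb4⟩ := row0_entry_bounds h j hmem
      refine (rzv_unique hM j (T (0, j)) hj2 hb1 hb2 ?_ hb3).symm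
      rcases Nat.lt_or_ge (T (0,j)) 2 with hy | hy
      · left; omega
      · right; exact hb4 hy
    · have hia : i ≤ a := by
        rcases (skew_char h i j).mp hmem with ⟨h1', -⟩ | ⟨-, h2', -⟩ <;> omega
      obtain ⟨hj1, hj2⟩ := (skew_row_r h i hx hia j).mp hmem
      rw [Tb_evalr i j (by omega) ⟨hia, hj1, hj2⟩]
      rw [row_entry_char h i j hx hia hmem]
      have : mmT a k al T i = mdef a k al T i := by
        unfold mmT
        rw [if_pos ⟨hx, hia⟩]
      rw [this]
  · rw [Tb_zero_outside i j hmem]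
    exact h.kt.2.1 (i, j) hmem

end Backward4
section Glue

variable {a k : ℕ}

lemma mdef_Tb {al m : ℕ → ℕ} (hM : MidP a k al m) (ha : 1 ≤ a) (hk : 1 ≤ k)
    (r : ℕ) (h1 : 1 ≤ r) (h2 : r ≤ a) : mdef a k al (Tb a k al m) r = m r := by
  unfold mdef
  have halm := alm_le hM r h1 h2
  have halk := al_le_k hM (r-1)
  have hflt : (Finset.Ico (al r) k).filter (fun j => Tb a k al m (r, j) = 1)
      = Finset.Ico (al r) (al r + m r) := by
    ext j
    simp only [Finset.mem_filter, Finset.mem_Ico]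
    rw [Tb_char1 hM r j]
    constructor
    · rintro ⟨⟨hj1, hj2⟩, (⟨hx, -⟩ | ⟨-, -, h3, h4⟩)⟩
      · exfalso; omega
      · exact ⟨h3, h4⟩
    · rintro ⟨hj1, hj2⟩
      exact ⟨⟨hj1, by omega⟩, Or.inr ⟨h1, h2, hj1, hj2⟩⟩
  rw [hflt, Nat.card_Ico]
  omega

lemma mmT_Tb {al m : ℕ → ℕ} (hM : MidP a k al m) (ha : 1 ≤ a) (hk : 1 ≤ k) :
    mmT a k al (Tb a k al m) = m := by
  funext r
  unfold mmT
  by_cases hr : 1 ≤ r ∧ r ≤ a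
  · rw [if_pos hr]
    exact mdef_Tb hM ha hk r hr.1 hr.2
  · rw [if_neg hr]
    exact (hM.msupp r (by omega)).symm

/-- The equivalence between Kronecker tableaux and parameter data. -/
noncomputable def equivKTMID (ha : 1 ≤ a) (hk : 1 ≤ k) :
    {x : (ℕ → ℕ) × (ℕ × ℕ → ℕ) //
      (∀ i, x.1 (i + 1) ≤ x.1 i) ∧
      (∀ i, a + 1 ≤ i → x.1 i = 0) ∧
      (∑ i ∈ Finset.range (a + 1), x.1 i) = k ∧
      IsKroneckerTableau (hookRect (3 * k) k a) (hookRect (3 * k) k a) x.1 x.2}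
    ≃ {w : (ℕ → ℕ) × (ℕ → ℕ) // MidP a k w.1 w.2} where
  toFun x := ⟨(x.val.1, mmT a k x.val.1 x.val.2),
    BH_MidP ⟨ha, hk, x.prop.1, x.prop.2.1, x.prop.2.2.1, x.prop.2.2.2⟩⟩
  invFun w := ⟨(w.val.1, Tb a k w.val.1 w.val.2),
    w.prop.dec, w.prop.supp, w.prop.sumk, Tb_isKT w.prop ha hk⟩
  left_inv x := by
    apply Subtype.ext
    have hbh : BH a k x.val.1 x.val.2 :=
      ⟨ha, hk, x.prop.1, x.prop.2.1, x.prop.2.2.1, x.prop.2.2.2⟩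
    show (x.val.1, Tb a k x.val.1 (mmT a k x.val.1 x.val.2)) = x.val
    rw [← T_eq_Tb hbh]
  right_inv w := by
    apply Subtype.ext
    show (w.val.1, mmT a k w.val.1 (Tb a k w.val.1 w.val.2)) = w.val
    rw [mmT_Tb w.prop ha hk]

end Glue
section Col

variable {a k : ℕ}

/-- totalize a `Fin a`-indexed tuple -/
def QF (a : ℕ) (q : Fin a → ℕ) : ℕ → ℕ := fun n => if h : n < a then q ⟨n, h⟩ else 0

/-- the difference sequence determined by a coloured partition -/
def dq (a : ℕ) (q : (Fin a → ℕ) × (Fin a → ℕ)) : ℕ → ℕ := fun j =>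
  if j = 0 then QF a q.1 0
  else if j = a then QF a q.2 (a-1)
  else QF a q.1 j + QF a q.2 (j-1)

/-- the ones-count sequence determined by a coloured partition -/
def mq (a : ℕ) (q : (Fin a → ℕ) × (Fin a → ℕ)) : ℕ → ℕ := fun r =>
  if r = 1 then QF a q.1 0
  else if 2 ≤ r ∧ r ≤ a then QF a q.1 (r-1) else 0

lemma QF_big (q : Fin a → ℕ) (n : ℕ) (h : a ≤ n) : QF a q n = 0 := by
  unfold QF
  rw [dif_neg (by omega)]

lemma dq_mid (ha : 1 ≤ a) (q : (Fin a → ℕ) × (Fin a → ℕ)) (j : ℕ) (h1 : 1 ≤ j) (h2 : j ≤ a) :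
    dq a q j = QF a q.1 j + QF a q.2 (j-1) := by
  unfold dq
  rw [if_neg (by omega)]
  by_cases hj : j = a
  · rw [if_pos hj, hj, QF_big q.1 a le_rfl]
    omega
  · rw [if_neg hj]

/-- sum of the Fin-indexed weighted sums in terms of totalizations -/
lemma finsum_eq (q : Fin a → ℕ) (w : ℕ → ℕ) :
    ∑ i : Fin a, w (i : ℕ) * q i = ∑ i ∈ Finset.range a, w i * QF a q i := by
  rw [← Fin.sum_univ_eq_sum_range (fun i => w i * QF a q i) a]
  apply Finset.sum_congr rfl
  intro i _
  congr 1
  unfold QF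
  rw [dif_pos i.isLt]

/-- key sum identity -/
lemma weighted_sum_eq (ha : 1 ≤ a) (q : (Fin a → ℕ) × (Fin a → ℕ)) :
    ∑ i ∈ Finset.range (a+1), Sfn a (dq a q) i
      = (∑ i : Fin a, ((i : ℕ) + 1) * q.1 i) + (∑ i : Fin a, ((i : ℕ) + 2) * q.2 i) := by
  have h1 : ∑ i ∈ Finset.range (a+1), Sfn a (dq a q) i
      = ∑ j ∈ Finset.range (a+1), (j+1) * dq a q j := by
    unfold Sfn
    exact sum_Ico_telescope (a+1) (dq a q)
  rw [h1]
  have h2 : (∑ i : Fin a, ((i : ℕ) + 1) * q.1 i)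
      = ∑ i ∈ Finset.range a, (i + 1) * QF a q.1 i := finsum_eq q.1 (fun i => i + 1)
  have h3 : (∑ i : Fin a, ((i : ℕ) + 2) * q.2 i)
      = ∑ i ∈ Finset.range a, (i + 2) * QF a q.2 i := finsum_eq q.2 (fun i => i + 2)
  rw [h2, h3]
  -- strip the j = 0 term
  rw [Finset.sum_range_succ']
  have h0 : dq a q 0 = QF a q.1 0 := by unfold dq; rw [if_pos rfl]
  have h4 : ∀ j ∈ Finset.range a, (j+1+1) * dq a q (j+1)
      = (j+2) * QF a q.1 (j+1) + (j+2) * QF a q.2 j := by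
    intro j hj
    simp only [Finset.mem_range] at hj
    rw [dq_mid ha q (j+1) (by omega) (by omega)]
    simp only [Nat.add_sub_cancel]
    ring
  rw [Finset.sum_congr rfl h4, Finset.sum_add_distrib, h0]
  -- now: ∑ (j+2) Q1 (j+1) + ∑ (j+2) Q2 j + 1 * Q1 0 = ∑ (i+1) Q1 i + ∑ (i+2) Q2 i
  have h5 : ∑ i ∈ Finset.range a, (i + 1) * QF a q.1 i
      = ∑ i ∈ Finset.range (a+1), (i + 1) * QF a q.1 i := by
    rw [Finset.sum_range_succ, QF_big q.1 a le_rfl]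
    omega
  rw [h5, Finset.sum_range_succ']
  ring

/-- recovering the partition -/
lemma alq_recover {al m : ℕ → ℕ} (hM : MidP a k al m) (ha : 1 ≤ a) :
    Sfn a (dq a (
      (fun i : Fin a => if (i : ℕ) = 0 then al 0 - al 1 else m ((i : ℕ) + 1)),
      (fun i : Fin a => if (i : ℕ) = a - 1 then al a
        else (al ((i : ℕ) + 1) - al ((i : ℕ) + 2)) - m ((i : ℕ) + 2)))) = al := by
  set q := ((fun i : Fin a => if (i : ℕ) = 0 then al 0 - al 1 else m ((i : ℕ) + 1)),
      (fun i : Fin a => if (i : ℕ) = a - 1 then al a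
        else (al ((i : ℕ) + 1) - al ((i : ℕ) + 2)) - m ((i : ℕ) + 2))) with hq
  have hdq : ∀ j, j ≤ a → dq a q j = al j - al (j+1) := by
    intro j hj
    rcases Nat.eq_zero_or_pos j with h0 | h0
    · subst h0
      show dq a q 0 = al 0 - al 1
      unfold dq
      rw [if_pos rfl]
      unfold QF
      rw [dif_pos (by omega : 0 < a)]
      simp [hq]
    · rw [dq_mid ha q j h0 hj]
      by_cases hja : j = a
      · rw [hja, QF_big q.1 a le_rfl]
        unfold QF
        rw [dif_pos (by omega : a - 1 < a)]
        simp only [hq]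
        have := hM.supp (a+1) (by omega)
        simp
        omega
      · -- 1 ≤ j ≤ a-1
        unfold QF
        rw [dif_pos (by omega : j < a), dif_pos (by omega : j - 1 < a)]
        simp only [hq]
        rw [if_neg (by simpa using (by omega : ¬ j = 0)), if_neg (by simpa using (by omega : ¬ j - 1 = a - 1))]
        simp only [show j - 1 + 1 = j by omega, show j - 1 + 2 = j + 1 by omega]
        have hmle := hM.mle (j+1) (by omega) (by omega)
        simp only [Nat.add_sub_cancel] at hmle
        have hd := hM.dec j
        omega
  funext i
  by_cases hia : i ≤ a
  · -- downward induction
    have key : ∀ t i, i ≤ a + 1 → a + 1 - i ≤ t → Sfn a (dq a q) i = al i := by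
      intro t
      induction t with
      | zero =>
        intro i h1 h2
        have : i = a+1 := by omega
        subst this
        rw [Sfn_zero_of_ge (a+1) le_rfl, hM.supp (a+1) le_rfl]
      | succ n ih =>
        intro i h1 h2
        by_cases hc : i = a+1
        · subst hc
          rw [Sfn_zero_of_ge (a+1) le_rfl, hM.supp (a+1) le_rfl]
        · rw [Sfn_step i (by omega), ih (i+1) (by omega) (by omega), hdq i (by omega)]
          have := hM.dec i
          omega
    exact key (a+1) i (by omega) (by omega)
  · rw [Sfn_zero_of_ge i (by omega), hM.supp i (by omega)]

/-- the equivalence between parameter data and coloured partitions -/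
noncomputable def equivMIDCOL (ha : 1 ≤ a) (hk : 1 ≤ k) :
    {w : (ℕ → ℕ) × (ℕ → ℕ) // MidP a k w.1 w.2}
    ≃ {p : (Fin a → ℕ) × (Fin a → ℕ) //
        (∑ i : Fin a, ((i : ℕ) + 1) * p.1 i) + (∑ i : Fin a, ((i : ℕ) + 2) * p.2 i) = k} where
  toFun w := ⟨((fun i : Fin a => if (i : ℕ) = 0 then w.val.1 0 - w.val.1 1
        else w.val.2 ((i : ℕ) + 1)),
      (fun i : Fin a => if (i : ℕ) = a - 1 then w.val.1 a
        else (w.val.1 ((i : ℕ) + 1) - w.val.1 ((i : ℕ) + 2)) - w.val.2 ((i : ℕ) + 2))), by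
    rw [← weighted_sum_eq ha, alq_recover w.prop ha]
    exact w.prop.sumk⟩
  invFun q := ⟨(Sfn a (dq a q.val), mq a q.val), by
    refine ⟨?_, ?_, ?_, ?_, ?_, ?_⟩
    · intro i
      exact Sfn_anti i (i+1) (by omega)
    · intro i hi
      exact Sfn_zero_of_ge i hi
    · rw [weighted_sum_eq ha]
      exact q.prop
    · show mq a q.val 1 = Sfn a (dq a q.val) 0 - Sfn a (dq a q.val) 1
      have hst : Sfn a (dq a q.val) 0 = dq a q.val 0 + Sfn a (dq a q.val) 1 :=
        Sfn_step 0 (by omega)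
      have h0 : dq a q.val 0 = QF a q.val.1 0 := by unfold dq; rw [if_pos rfl]
      unfold mq
      rw [if_pos rfl]
      omega
    · intro r h2 hra
      show mq a q.val r ≤ Sfn a (dq a q.val) (r-1) - Sfn a (dq a q.val) r
      have hst : Sfn a (dq a q.val) (r-1) = dq a q.val (r-1) + Sfn a (dq a q.val) r := by
        have := Sfn_step (a := a) (m := dq a q.val) (r-1) (by omega)
        rw [show r - 1 + 1 = r by omega] at this
        exact this
      have hd : dq a q.val (r-1) = QF a q.val.1 (r-1) + QF a q.val.2 (r-1-1) :=
        dq_mid ha q.val (r-1) (by omega) (by omega)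
      unfold mq
      rw [if_neg (by omega), if_pos ⟨h2, hra⟩]
      omega
    · intro r hr
      show mq a q.val r = 0
      unfold mq
      rw [if_neg (by omega), if_neg (by omega)]⟩
  left_inv w := by
    apply Subtype.ext
    obtain ⟨⟨al, m⟩, hM⟩ := w
    show (Sfn a (dq a _), mq a _) = (al, m)
    rw [alq_recover hM ha]
    refine Prod.ext rfl ?_
    show mq a _ = m
    funext r
    unfold mq QF
    by_cases hr1 : r = 1
    · subst hr1
      rw [if_pos rfl, dif_pos (by omega : 0 < a)]
      simp only [if_pos rfl]
      exact (hM.m1).symm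
    · rw [if_neg hr1]
      by_cases hr2 : 2 ≤ r ∧ r ≤ a
      · rw [if_pos hr2, dif_pos (by omega : r - 1 < a)]
        simp only
        rw [if_neg (by simpa using (by omega : ¬ r - 1 = 0))]
        rw [show r - 1 + 1 = r by omega]
      · rw [if_neg hr2]
        exact (hM.msupp r (by omega)).symm
  right_inv q := by
    apply Subtype.ext
    obtain ⟨⟨q1, q2⟩, hq⟩ := q
    refine Prod.ext ?_ ?_
    · funext i
      show (if (i : ℕ) = 0 then Sfn a (dq a (q1, q2)) 0 - Sfn a (dq a (q1, q2)) 1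
        else mq a (q1, q2) ((i : ℕ) + 1)) = q1 i
      by_cases hi : (i : ℕ) = 0
      · rw [if_pos hi]
        have hst : Sfn a (dq a (q1, q2)) 0 = dq a (q1, q2) 0 + Sfn a (dq a (q1, q2)) 1 :=
          Sfn_step 0 (by omega)
        have h0 : dq a (q1, q2) 0 = QF a q1 0 := by unfold dq; rw [if_pos rfl]
        unfold QF at h0
        rw [dif_pos (by omega : 0 < a)] at h0
        have : q1 ⟨0, by omega⟩ = q1 i := by
          congr 1
          exact (Fin.ext hi).symm
        omega
      · rw [if_neg hi]
        unfold mq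
        rw [if_neg (by omega), if_pos ⟨by omega, by omega⟩]
        unfold QF
        rw [dif_pos (by simpa using i.isLt : (i : ℕ) + 1 - 1 < a)]
        simp
    · funext i
      show (if (i : ℕ) = a - 1 then Sfn a (dq a (q1, q2)) a
        else (Sfn a (dq a (q1, q2)) ((i : ℕ) + 1) - Sfn a (dq a (q1, q2)) ((i : ℕ) + 2))
          - mq a (q1, q2) ((i : ℕ) + 2)) = q2 i
      by_cases hi : (i : ℕ) = a - 1
      · rw [if_pos hi]
        have hst : Sfn a (dq a (q1, q2)) a = dq a (q1, q2) a + Sfn a (dq a (q1, q2)) (a+1) :=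
          Sfn_step a (by omega)
        rw [Sfn_zero_of_ge (a+1) le_rfl] at hst
        have hda : dq a (q1, q2) a = QF a q2 (a-1) := by
          unfold dq
          rw [if_neg (by omega), if_pos rfl]
        unfold QF at hda
        rw [dif_pos (by omega : a - 1 < a)] at hda
        have hqi : q2 ⟨a-1, by omega⟩ = q2 i := by
          congr 1
          exact (Fin.ext hi).symm
        omega
      · rw [if_neg hi]
        have hilt : (i : ℕ) < a - 1 := by
          have := i.isLt
          omega
        have hst : Sfn a (dq a (q1, q2)) ((i:ℕ)+1)
            = dq a (q1, q2) ((i:ℕ)+1) + Sfn a (dq a (q1, q2)) ((i:ℕ)+2) :=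
          Sfn_step ((i:ℕ)+1) (by omega)
        have hd : dq a (q1, q2) ((i:ℕ)+1) = QF a q1 ((i:ℕ)+1) + QF a q2 (i:ℕ) := by
          rw [dq_mid ha (q1, q2) ((i:ℕ)+1) (by omega) (by omega)]
          simp only [Nat.add_sub_cancel]
        unfold mq
        rw [if_neg (by omega), if_pos ⟨by omega, by omega⟩]
        have hQ2 : QF a q2 (i:ℕ) = q2 i := by
          unfold QF
          rw [dif_pos i.isLt]
        have hQ1 : QF a q1 ((i:ℕ)+2-1) = QF a q1 ((i:ℕ)+1) := by
          congr 1
        rw [hQ1] at *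
        omega

end Col

/-- The total number of Kronecker tableaux of shape `(3k, k^a)/α` and type
`(3k, k^a)/α`, summed over all partitions `α ⊢ k` with at most `a+1` parts, equals
the number of coloured partitions of `k` with parts in `B_a`. -/
theorem kroneckerTableaux_family1_count (a k : ℕ) (ha : 1 ≤ a) (hk : 1 ≤ k) :
    Nat.card {x : (ℕ → ℕ) × (ℕ × ℕ → ℕ) //
      (∀ i, x.1 (i + 1) ≤ x.1 i) ∧
      (∀ i, a + 1 ≤ i → x.1 i = 0) ∧
      (∑ i ∈ Finset.range (a + 1), x.1 i) = k ∧
      IsKroneckerTableau (hookRect (3 * k) k a) (hookRect (3 * k) k a) x.1 x.2} =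
    colouredB a k := by
  unfold colouredB
  exact Nat.card_congr ((equivKTMID ha hk).trans (equivMIDCOL ha hk))
end

section
/- Let a ≥ 1 and i ≥ 1, and let k be a nonnegative integer with 2k ≥ (a+1)i. If there exists a Kronecker tableau of shape (3k, k^a)/α and type (3k−ai, (k+i)^a)/α for some partition α of k with at most a+1 parts, then k ≥ a(a+1)i/2. Equivalently, for 2k ≥ (a+1)i and k < a(a+1)i/2 there are no such Kronecker tableaux for any such α. -/
lemma entryCount_eq_filter (T : ℕ × ℕ → ℕ) (S : Set (ℕ × ℕ)) (F : Finset (ℕ × ℕ))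
    (P : ℕ × ℕ → Prop) [DecidablePred P]
    (h1 : ∀ p, p ∈ S ↔ P p) (h2 : ∀ p, P p → p ∈ F) (v : ℕ) :
    entryCount T S v = (F.filter (fun p => P p ∧ T p = v)).card := by
  have hset : {p : ℕ × ℕ | p ∈ S ∧ T p = v}
      = ↑(F.filter (fun p => P p ∧ T p = v)) := by
    ext p
    simp only [Set.mem_setOf_eq, Finset.coe_filter, h1]
    constructor
    · rintro ⟨hp, ht⟩; exact ⟨h2 p hp, hp, ht⟩
    · rintro ⟨_, hp, ht⟩; exact ⟨hp, ht⟩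
  have h3 : entryCount T S v = Set.ncard {p : ℕ × ℕ | p ∈ S ∧ T p = v} := by
    rw [entryCount, ← Nat.card_coe_set_eq]
    rfl
  rw [h3, hset, Set.ncard_coe_finset]

def KTamb (a k : ℕ) : Finset (ℕ × ℕ) := Finset.range (a+1) ×ˢ Finset.range (3*k)

def KTfull (a k : ℕ) (alpha : ℕ → ℕ) (T : ℕ × ℕ → ℕ) (u : ℕ) : Finset (ℕ × ℕ) :=
  (KTamb a k).filter (fun p => (alpha p.1 ≤ p.2 ∧ p.2 < hookRect (3*k) k a p.1) ∧ T p = u)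

def KTpre (a k : ℕ) (alpha : ℕ → ℕ) (T : ℕ × ℕ → ℕ) (r c u : ℕ) : Finset (ℕ × ℕ) :=
  (KTamb a k).filter (fun p =>
    ((alpha p.1 ≤ p.2 ∧ p.2 < hookRect (3*k) k a p.1) ∧ (p.1 < r ∨ (p.1 = r ∧ c ≤ p.2))) ∧ T p = u)

lemma mem_KTamb (a k : ℕ) (alpha : ℕ → ℕ) {p : ℕ × ℕ}
    (h : alpha p.1 ≤ p.2 ∧ p.2 < hookRect (3*k) k a p.1) : p ∈ KTamb a k := by
  have h1 : p.1 < a + 1 := by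
    by_contra hc
    have : hookRect (3*k) k a p.1 = 0 := by
      unfold hookRect; rw [if_neg (by omega), if_neg (by omega)]
    omega
  have h2 : p.2 < 3 * k := by
    have : hookRect (3*k) k a p.1 ≤ 3 * k := by
      unfold hookRect; split_ifs <;> omega
    omega
  simp [KTamb, Finset.mem_product, h1, h2]

lemma mem_KTfull (a k : ℕ) (alpha : ℕ → ℕ) (T : ℕ × ℕ → ℕ) (u : ℕ) (p : ℕ × ℕ) :
    p ∈ KTfull a k alpha T u ↔
      (alpha p.1 ≤ p.2 ∧ p.2 < hookRect (3*k) k a p.1) ∧ T p = u := by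
  constructor
  · intro h; exact (Finset.mem_filter.mp h).2
  · intro h; exact Finset.mem_filter.mpr ⟨mem_KTamb a k alpha h.1, h⟩

lemma mem_KTpre (a k : ℕ) (alpha : ℕ → ℕ) (T : ℕ × ℕ → ℕ) (r c u : ℕ) (p : ℕ × ℕ) :
    p ∈ KTpre a k alpha T r c u ↔
      ((alpha p.1 ≤ p.2 ∧ p.2 < hookRect (3*k) k a p.1) ∧ (p.1 < r ∨ (p.1 = r ∧ c ≤ p.2)))
        ∧ T p = u := by
  constructor
  · intro h; exact (Finset.mem_filter.mp h).2
  · intro h; exact Finset.mem_filter.mpr ⟨mem_KTamb a k alpha h.1.1, h⟩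

/-- For `i ≥ 1` and `2k ≥ (a+1)i`, if a Kronecker tableau of shape `(3k, k^a)/α` and
type `(3k−ai, (k+i)^a)/α` exists for some partition `α ⊢ k` with at most `a+1`
parts, then `k ≥ a(a+1)i/2` (equivalently `2k ≥ a(a+1)i`). -/
theorem kroneckerTableaux_family2_vanishing (a i k : ℕ) (ha : 1 ≤ a) (hi : 1 ≤ i)
    (hk : (a + 1) * i ≤ 2 * k)
    (alpha : ℕ → ℕ) (T : ℕ × ℕ → ℕ)
    (hdec : ∀ n, alpha (n + 1) ≤ alpha n)
    (hlen : ∀ n, a + 1 ≤ n → alpha n = 0)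
    (hsum : (∑ n ∈ Finset.range (a + 1), alpha n) = k)
    (hT : IsKroneckerTableau (hookRect (3 * k) k a)
      (fun t => if t = 0 then 3 * k - a * i else if t < a + 1 then k + i else 0)
      alpha T) :
    a * (a + 1) * i ≤ 2 * k := by
  obtain ⟨-, -, -, hrow, hcol, htype, hlat, -⟩ := hT
  have hanti : ∀ m n : ℕ, m ≤ n → alpha n ≤ alpha m := by
    intro m n h
    induction h with
    | refl => exact le_rfl
    | step h ih => exact le_trans (hdec _) ih
  have halk : ∀ n, n ≤ a → alpha n ≤ k := by
    intro n hn
    rw [← hsum]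
    exact Finset.single_le_sum (fun _ _ => Nat.zero_le _) (Finset.mem_range.mpr (by omega))
  have hlamr : ∀ r : ℕ, 1 ≤ r → r ≤ a → hookRect (3*k) k a r = k := by
    intro r h1 h2; unfold hookRect; rw [if_neg (by omega), if_pos (by omega)]
  have hNdef : ∀ u, entryCount T (skewCells (hookRect (3*k) k a) alpha) u
      = (KTfull a k alpha T u).card := fun u =>
    entryCount_eq_filter T _ _ (fun p => alpha p.1 ≤ p.2 ∧ p.2 < hookRect (3*k) k a p.1)
      (fun _ => Iff.rfl) (fun _ hp => mem_KTamb a k alpha hp) u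
  have hPdef : ∀ r c u, entryCount T (rrwPrefix (hookRect (3*k) k a) alpha r c) u
      = (KTpre a k alpha T r c u).card := fun r c u =>
    entryCount_eq_filter T _ _
      (fun p => (alpha p.1 ≤ p.2 ∧ p.2 < hookRect (3*k) k a p.1) ∧
        (p.1 < r ∨ (p.1 = r ∧ c ≤ p.2)))
      (fun _ => Iff.rfl) (fun _ hp => mem_KTamb a k alpha hp.1) u
  -- exact total counts: for 2 ≤ u ≤ a+1, #cells of value u plus alpha (u-1) is k+i
  have hNcard : ∀ u, 2 ≤ u → u ≤ a + 1 →
      (KTfull a k alpha T u).card + alpha (u - 1) = k + i := by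
    intro u h1 h2
    have ht := htype (u - 1)
    have heq : u - 1 + 1 = u := by omega
    rw [heq, hNdef] at ht
    have hnu : (fun t => if t = 0 then 3 * k - a * i else if t < a + 1 then k + i else 0) (u - 1)
        = k + i := by
      simp only
      rw [if_neg (by omega), if_pos (by omega)]
    rw [hnu] at ht
    have := halk (u - 1) (by omega)
    omega
  have hlat' : ∀ r c v, (KTpre a k alpha T r c (v+2)).card + alpha (v+1)
      ≤ (KTpre a k alpha T r c (v+1)).card + alpha v := by
    intro r c v
    have := hlat r c v
    rwa [hPdef, hPdef] at this
  have hPreSub : ∀ r c u, KTpre a k alpha T r c u ⊆ KTfull a k alpha T u := by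
    intro r c u p hp
    rw [mem_KTpre] at hp
    rw [mem_KTfull]
    exact ⟨hp.1.1, hp.2⟩
  -- Step Q : every entry u (2 ≤ u ≤ a+1) lies in a row < u
  have hQ : ∀ u, 2 ≤ u → u ≤ a+1 → ∀ p ∈ KTfull a k alpha T u, p.1 < u := by
    have key : ∀ d u, u + d = a + 1 → 2 ≤ u → ∀ p ∈ KTfull a k alpha T u, p.1 < u := by
      intro d
      induction d with
      | zero =>
        intro u hu _ p hp
        rw [mem_KTfull] at hp
        by_contra hc
        have h0 : hookRect (3*k) k a p.1 = 0 := by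
          unfold hookRect; rw [if_neg (by omega), if_neg (by omega)]
        omega
      | succ d ih =>
        intro u hu h2 p hp
        have hua : u ≤ a := by omega
        obtain ⟨w, rfl⟩ : ∃ w, u = w + 2 := ⟨u - 2, by omega⟩
        have hcard1 : (KTfull a k alpha T (w+3)).card + alpha (w+2) = k + i :=
          hNcard (w+3) (by omega) (by omega)
        have halk2 := halk (w+2) (by omega)
        have hne : (KTfull a k alpha T (w+3)).Nonempty := by
          rw [← Finset.card_pos]; omega
        obtain ⟨q, hq, hqmax⟩ := Finset.exists_max_image (KTfull a k alpha T (w+3)) Prod.fst hne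
        obtain ⟨q0, hq0, hq0min⟩ := Finset.exists_min_image
          ((KTfull a k alpha T (w+3)).filter (fun p' => p'.1 = q.1)) Prod.snd
          ⟨q, Finset.mem_filter.mpr ⟨hq, rfl⟩⟩
        obtain ⟨r, hrdef⟩ : ∃ r, r = q.1 := ⟨_, rfl⟩
        obtain ⟨c, hcdef⟩ : ∃ c, c = q0.2 := ⟨_, rfl⟩
        have hrle : ∀ p' ∈ KTfull a k alpha T (w+3), p'.1 ≤ r := by
          intro p' hp'; rw [hrdef]; exact hqmax p' hp'
        have hru : r ≤ w + 2 := by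
          have := ih (w+3) (by omega) (by omega) q hq
          omega
        have hq0f : q0 ∈ KTfull a k alpha T (w+3) := (Finset.mem_filter.mp hq0).1
        have hq0r : q0.1 = r := by
          rw [hrdef]; exact (Finset.mem_filter.mp hq0).2
        rw [mem_KTfull] at hq0f
        have hcmin : ∀ p' ∈ KTfull a k alpha T (w+3), p'.1 = r → c ≤ p'.2 := by
          intro p' hp' hpr
          rw [hcdef]
          exact hq0min p' (Finset.mem_filter.mpr ⟨hp', by omega⟩)
        have hq0c : q0.2 = c := hcdef.symm
        have hfull : KTpre a k alpha T r c (w+3) = KTfull a k alpha T (w+3) := by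
          apply Finset.Subset.antisymm (hPreSub r c (w+3))
          intro p' hp'
          have h1 := hrle p' hp'
          have hp'' := hp'
          rw [mem_KTfull] at hp''
          rw [mem_KTpre]
          refine ⟨⟨hp''.1, ?_⟩, hp''.2⟩
          rcases Nat.lt_or_ge p'.1 r with h | h
          · exact Or.inl h
          · have hpr : p'.1 = r := by omega
            exact Or.inr ⟨hpr, hcmin p' hp' hpr⟩
        have hnorow : ∀ p' ∈ KTpre a k alpha T r c (w+2), p'.1 < r := by
          intro p' hp'
          rw [mem_KTpre] at hp'
          rcases hp'.1.2 with h | ⟨hpr, hpc⟩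
          · exact h
          · exfalso
            have e : q0.1 = p'.1 := by omega
            have hm1 : (q0.1, q0.2) ∈ skewCells (hookRect (3*k) k a) alpha := hq0f.1
            have hm2 : (q0.1, p'.2) ∈ skewCells (hookRect (3*k) k a) alpha := by
              rw [e]; exact hp'.1.1
            have hmono := hrow q0.1 q0.2 p'.2 hm1 hm2 (by omega)
            have e1 : T (q0.1, q0.2) = w + 3 := by rw [Prod.mk.eta]; exact hq0f.2
            have e2 : T (q0.1, p'.2) = w + 2 := by rw [e, Prod.mk.eta]; exact hp'.2
            omega
        have hl := hlat' r c (w+1)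
        have e32 : w + 1 + 2 = w + 3 := by omega
        have e21 : w + 1 + 1 = w + 2 := by omega
        rw [e32, e21, hfull] at hl
        have hcard2 : (KTfull a k alpha T (w+2)).card + alpha (w+1) = k + i := by
          have := hNcard (w+2) (by omega) (by omega)
          have e : w + 2 - 1 = w + 1 := by omega
          rwa [e] at this
        have hsub2 := Finset.card_le_card (hPreSub r c (w+2))
        have hcqe : KTpre a k alpha T r c (w+2) = KTfull a k alpha T (w+2) :=
          Finset.eq_of_subset_of_card_le (hPreSub r c (w+2)) (by omega)
        have hp2 : p ∈ KTpre a k alpha T r c (w+2) := by rw [hcqe]; exact hp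
        have := hnorow p hp2
        omega
    intro u h2 hle
    exact key (a + 1 - u) u (by omega) h2
  -- Step Row0 : entries w+2 in row 0 number at most alpha w - alpha (w+1)
  have hRow0 : ∀ w : ℕ,
      ((KTfull a k alpha T (w+2)).filter (fun p => p.1 = 0)).card + alpha (w+1) ≤ alpha w := by
    intro w
    by_cases hA : ((KTamb a k).filter (fun p =>
        (alpha p.1 ≤ p.2 ∧ p.2 < hookRect (3*k) k a p.1) ∧ p.1 = 0 ∧ w+2 ≤ T p)).Nonempty
    · obtain ⟨q0, hq0, hq0min⟩ := Finset.exists_min_image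
        ((KTamb a k).filter (fun p =>
          (alpha p.1 ≤ p.2 ∧ p.2 < hookRect (3*k) k a p.1) ∧ p.1 = 0 ∧ w+2 ≤ T p))
        Prod.snd hA
      obtain ⟨c, hcdef⟩ : ∃ c, c = q0.2 := ⟨_, rfl⟩
      have hq0' := (Finset.mem_filter.mp hq0).2
      have hq0c : q0.2 = c := hcdef.symm
      have hcmin : ∀ p' : ℕ × ℕ, (alpha p'.1 ≤ p'.2 ∧ p'.2 < hookRect (3*k) k a p'.1) →
          p'.1 = 0 → w + 2 ≤ T p' → c ≤ p'.2 := by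
        intro p' h1 h2 h3
        rw [hcdef]
        exact hq0min p' (Finset.mem_filter.mpr ⟨mem_KTamb a k alpha h1, h1, h2, h3⟩)
      have e1 : KTpre a k alpha T 0 c (w+2)
          = (KTfull a k alpha T (w+2)).filter (fun p => p.1 = 0) := by
        ext p
        rw [mem_KTpre, Finset.mem_filter, mem_KTfull]
        constructor
        · rintro ⟨⟨hs, h | ⟨h0, hcp⟩⟩, ht⟩
          · omega
          · exact ⟨⟨hs, ht⟩, h0⟩
        · rintro ⟨⟨hs, ht⟩, h0⟩
          exact ⟨⟨hs, Or.inr ⟨h0, hcmin p hs h0 (by omega)⟩⟩, ht⟩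
      have e2 : KTpre a k alpha T 0 c (w+1) = ∅ := by
        rw [Finset.eq_empty_iff_forall_notMem]
        intro p hp
        rw [mem_KTpre] at hp
        rcases hp.1.2 with h | ⟨h0, hcp⟩
        · omega
        · have e : q0.1 = p.1 := by omega
          have hm1 : (q0.1, q0.2) ∈ skewCells (hookRect (3*k) k a) alpha := hq0'.1
          have hm2 : (q0.1, p.2) ∈ skewCells (hookRect (3*k) k a) alpha := by
            rw [e]; exact hp.1.1
          have hmono := hrow q0.1 q0.2 p.2 hm1 hm2 (by omega)
          have e1' : w + 2 ≤ T (q0.1, q0.2) := by rw [Prod.mk.eta]; exact hq0'.2.2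
          have e2' : T (q0.1, p.2) = w + 1 := by rw [e, Prod.mk.eta]; exact hp.2
          omega
      have := hlat' 0 c w
      rw [e1, e2] at this
      simpa using this
    · have he : ((KTfull a k alpha T (w+2)).filter (fun p => p.1 = 0)) = ∅ := by
        rw [Finset.eq_empty_iff_forall_notMem]
        intro p hp
        rw [Finset.mem_filter, mem_KTfull] at hp
        exact hA ⟨p, Finset.mem_filter.mpr ⟨mem_KTamb a k alpha hp.1.1,
          hp.1.1, hp.2, by omega⟩⟩
      rw [he]
      simpa using hdec w
  -- Step Col : entries w+2 outside row 0 occupy distinct columns in [alpha (w+1), k)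
  have hCol : ∀ w : ℕ, w + 2 ≤ a + 1 →
      ((KTfull a k alpha T (w+2)).filter (fun p => ¬ p.1 = 0)).card ≤ k - alpha (w+1) := by
    intro w hw
    have hcard : ((KTfull a k alpha T (w+2)).filter (fun p => ¬ p.1 = 0)).card
        ≤ (Finset.Ico (alpha (w+1)) k).card := by
      apply Finset.card_le_card_of_injOn Prod.snd
      · intro p hp
        rw [Finset.mem_coe, Finset.mem_filter] at hp
        obtain ⟨hpf, hp0⟩ := hp
        have hrow' := hQ (w+2) (by omega) hw p hpf
        rw [mem_KTfull] at hpf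
        have h1 : 1 ≤ p.1 := by omega
        have h2 : p.1 ≤ w + 1 := by omega
        have hlk : hookRect (3*k) k a p.1 = k := hlamr p.1 h1 (by omega)
        rw [Finset.mem_coe, Finset.mem_Ico]
        exact ⟨le_trans (hanti p.1 (w+1) h2) hpf.1.1, by omega⟩
      · intro p hp q hq hpq
        rw [Finset.mem_coe, Finset.mem_filter, mem_KTfull] at hp hq
        obtain ⟨⟨hps, hpt⟩, hp0⟩ := hp
        obtain ⟨⟨hqs, hqt⟩, hq0⟩ := hq
        rcases Nat.lt_trichotomy p.1 q.1 with h | h | h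
        · exfalso
          have hm1 : (p.1, p.2) ∈ skewCells (hookRect (3*k) k a) alpha := hps
          have hm2 : (q.1, p.2) ∈ skewCells (hookRect (3*k) k a) alpha := by
            rw [hpq]; exact hqs
          have := hcol p.1 q.1 p.2 hm1 hm2 h
          have e1 : T (p.1, p.2) = w + 2 := by rw [Prod.mk.eta]; exact hpt
          have e2 : T (q.1, p.2) = w + 2 := by rw [hpq, Prod.mk.eta]; exact hqt
          omega
        · exact Prod.ext h hpq
        · exfalso
          have hm1 : (q.1, q.2) ∈ skewCells (hookRect (3*k) k a) alpha := hqs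
          have hm2 : (p.1, q.2) ∈ skewCells (hookRect (3*k) k a) alpha := by
            rw [← hpq]; exact hps
          have := hcol q.1 p.1 q.2 hm1 hm2 h
          have e1 : T (q.1, q.2) = w + 2 := by rw [Prod.mk.eta]; exact hqt
          have e2 : T (p.1, q.2) = w + 2 := by rw [← hpq, Prod.mk.eta]; exact hpt
          omega
    rwa [Nat.card_Ico] at hcard
  -- splitting counts by row 0 / other rows
  have hsplit : ∀ u : ℕ, ((KTfull a k alpha T u).filter (fun p => p.1 = 0)).card
      + ((KTfull a k alpha T u).filter (fun p => ¬ p.1 = 0)).card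
      = (KTfull a k alpha T u).card := by
    intro u
    exact Finset.card_filter_add_card_filter_not (fun p : ℕ × ℕ => p.1 = 0)
  -- the key step: alpha decreases by at least i at each step
  have hstep : ∀ w, w < a → alpha (w+1) + i ≤ alpha w := by
    intro w hw
    have h1 := hRow0 w
    have h2 := hCol w (by omega)
    have h3 := hsplit (w+2)
    have h4 : (KTfull a k alpha T (w+2)).card + alpha (w+1) = k + i := by
      have := hNcard (w+2) (by omega) (by omega)
      have e : w + 2 - 1 = w + 1 := by omega
      rwa [e] at this
    have h5 := halk (w+1) (by omega)
    omega
  -- lower bounds for alpha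
  have hlow : ∀ d, d ≤ a → d * i ≤ alpha (a - d) := by
    intro d
    induction d with
    | zero => intro _; simp
    | succ d ih =>
      intro hd
      have h1 := ih (by omega)
      have h2 := hstep (a - d - 1) (by omega)
      have e : a - d - 1 + 1 = a - d := by omega
      rw [e] at h2
      have e2 : a - (d+1) = a - d - 1 := by omega
      rw [e2]
      have e3 : (d+1) * i = d * i + i := by ring
      omega
  -- sum up
  have hfin : ∀ v ∈ Finset.range (a+1), (a - v) * i ≤ alpha v := by
    intro v hv
    rw [Finset.mem_range] at hv
    have h := hlow (a - v) (by omega)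
    rwa [show a - (a - v) = v from by omega] at h
  have hsum2 : (∑ v ∈ Finset.range (a+1), (a - v) * i) ≤ k := by
    rw [← hsum]; exact Finset.sum_le_sum hfin
  have hrefl : (∑ v ∈ Finset.range (a+1), (a - v)) = ∑ v ∈ Finset.range (a+1), v := by
    have h := Finset.sum_range_reflect (fun j => a - j) (a+1)
    have h' : (∑ j ∈ Finset.range (a+1), (a - (a + 1 - 1 - j)))
        = ∑ j ∈ Finset.range (a+1), j := by
      apply Finset.sum_congr rfl
      intro x hx
      rw [Finset.mem_range] at hx
      omega
    rw [← h, h']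
  have hsum3 : (∑ v ∈ Finset.range (a+1), v) * i ≤ k := by
    calc (∑ v ∈ Finset.range (a+1), v) * i
        = (∑ v ∈ Finset.range (a+1), (a - v)) * i := by rw [hrefl]
      _ = ∑ v ∈ Finset.range (a+1), (a - v) * i := Finset.sum_mul _ _ _
      _ ≤ k := hsum2
  have hgauss : (∑ v ∈ Finset.range (a+1), v) * 2 = (a+1) * a := by
    rw [Finset.sum_range_id_mul_two]
    simp
  have h2b : 2 * ((∑ v ∈ Finset.range (a+1), v) * i) ≤ 2 * k :=
    mul_le_mul_right hsum3 2
  calc a * (a + 1) * i = ((∑ v ∈ Finset.range (a+1), v) * 2) * i := by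
        rw [hgauss]; ring
    _ = 2 * ((∑ v ∈ Finset.range (a+1), v) * i) := by ring
    _ ≤ 2 * k := h2b
end
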